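/- arXiv:2104.04220 — 3 statements merged into one kernel-verified Lean document; each statement's English description precedes it below -/
import Mathlib

section
/- For n ≥ 1, the number of run-sorted permutations of [n] with exactly k descents (indexed so that the descent-set generating polynomial is A_n) satisfies the recursion A_n(t) = A_{n-1}(t) + t·∑_{i=1}^{n-2} C(n-2, i-1) A_i(t), where A_n(t) = ∑_{σ ∈ RSP(n)} t^{des(σ)} and A_1(t) = 1. -/
/-- Lexicographic (≤) comparison of lists of naturals, as a `Bool`. -/
def lexLe : List ℕ → List ℕ → Bool
  | [], _ => true
  | _ :: _, [] => false
  | a :: as, b :: bs => decide (a < b) || (a == b && lexLe as bs)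

/-- Split a word into its maximal (weakly) increasing runs. -/
def splitRuns : List ℕ → List (List ℕ)
  | [] => []
  | [x] => [[x]]
  | x :: y :: rest =>
    match splitRuns (y :: rest) with
    | [] => [[x]]
    | r :: rs => if x ≤ y then (x :: r) :: rs else [x] :: r :: rs

/-- The number of descents of a word: positions k (0-indexed) with w(k) > w(k+1). -/
def des (w : List ℕ) : ℕ := ((w.zip w.tail).filter fun p => decide (p.2 < p.1)).length

-- basic des lemmas
@[simp] lemma des_nil : des [] = 0 := rfl
@[simp] lemma des_single (x : ℕ) : des [x] = 0 := rfl
lemma des_cons_cons (x y : ℕ) (l : List ℕ) :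
    des (x :: y :: l) = (if y < x then 1 else 0) + des (y :: l) := by
  simp only [des, List.tail_cons, List.zip_cons_cons, List.filter_cons]
  split <;> rename_i h <;> simp at h <;> simp [h, Nat.add_comm]

lemma splitRuns_cons (x : ℕ) (l : List ℕ) :
    ∃ r rs, splitRuns (x :: l) = (x :: r) :: rs := by
  induction l generalizing x with
  | nil => exact ⟨[], [], rfl⟩
  | cons y t ih =>
    obtain ⟨r, rs, h⟩ := ih y
    by_cases hxy : x ≤ y
    · exact ⟨y :: r, rs, by simp [splitRuns, h, hxy]⟩
    · exact ⟨[], (y :: r) :: rs, by simp [splitRuns, h, hxy]⟩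

lemma splitRuns_cons_cons (x y : ℕ) (l : List ℕ) :
    splitRuns (x :: y :: l) = if x ≤ y then
      ((x :: (splitRuns (y :: l)).head!) :: (splitRuns (y :: l)).tail)
      else [x] :: splitRuns (y :: l) := by
  obtain ⟨r, rs, h⟩ := splitRuns_cons y l
  simp only [splitRuns, h]
  split <;> simp

@[simp] lemma flatten_splitRuns (l : List ℕ) : (splitRuns l).flatten = l := by
  match l with
  | [] => rfl
  | [x] => rfl
  | x :: y :: t =>
    have ih := flatten_splitRuns (y :: t)
    obtain ⟨r, rs, h⟩ := splitRuns_cons y t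
    rw [h] at ih
    simp only [splitRuns, h]
    split <;> simpa using ih

lemma ne_nil_of_mem_splitRuns {l : List ℕ} {r : List ℕ} (h : r ∈ splitRuns l) : r ≠ [] := by
  match l with
  | [] => simp [splitRuns] at h
  | [x] => simp [splitRuns] at h; simp [h]
  | x :: y :: t =>
    obtain ⟨r', rs, h'⟩ := splitRuns_cons y t
    simp only [splitRuns, h'] at h
    split at h
    · rcases List.mem_cons.1 h with h | h
      · simp [h]
      · exact ne_nil_of_mem_splitRuns (l := y :: t) (by rw [h']; exact List.mem_cons_of_mem _ h)
    · rcases List.mem_cons.1 h with h | h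
      · simp [h]
      · exact ne_nil_of_mem_splitRuns (l := y :: t) (by rw [h']; exact h)

/-- head with default 0 -/
def hd0 (l : List ℕ) : ℕ := l.head?.getD 0
/-- last with default 0 -/
def lst0 (l : List ℕ) : ℕ := l.getLast?.getD 0

@[simp] lemma hd0_cons (x : ℕ) (l : List ℕ) : hd0 (x :: l) = x := rfl
@[simp] lemma lst0_singleton (x : ℕ) : lst0 [x] = x := rfl
@[simp] lemma lst0_cons_cons (x y : ℕ) (l : List ℕ) : lst0 (x :: y :: l) = lst0 (y :: l) := by
  simp [lst0]

/-- The boundary relation between consecutive runs. -/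
def Bd (r s : List ℕ) : Prop := hd0 s < lst0 r

/-- Structure of the output of splitRuns. -/
lemma goodRuns_splitRuns (l : List ℕ) :
    (∀ r ∈ splitRuns l, r.Chain' (· ≤ ·)) ∧ (splitRuns l).Chain' Bd := by
  match l with
  | [] => exact ⟨by simp [splitRuns], by simp [splitRuns, List.Chain']⟩
  | [x] => exact ⟨by simp [splitRuns, List.Chain'], by simp [splitRuns, List.Chain']⟩
  | x :: y :: t =>
    obtain ⟨ihc, ihb⟩ := goodRuns_splitRuns (y :: t)
    obtain ⟨r, rs, h⟩ := splitRuns_cons y t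
    rw [h] at ihc ihb
    simp only [splitRuns, h]
    by_cases hxy : x ≤ y
    · simp only [if_pos hxy]
      constructor
      · intro s hs
        rcases List.mem_cons.1 hs with hs | hs
        · subst hs
          exact List.IsChain.cons_cons hxy (ihc _ (by simp))
        · exact ihc _ (List.mem_cons_of_mem _ hs)
      · rcases rs with _ | ⟨s, rs'⟩
        · simp [List.Chain']
        · refine List.IsChain.cons_cons ?_ (List.isChain_cons_cons.1 ihb).2
          have := (List.isChain_cons_cons.1 ihb).1
          simpa [Bd] using this
    · simp only [if_neg hxy]
      constructor
      · intro s hs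
        rcases List.mem_cons.1 hs with hs | hs
        · subst hs; simp [List.Chain']
        · exact ihc _ hs
      · refine List.IsChain.cons_cons ?_ ihb
        simp [Bd, Nat.lt_of_not_le hxy]

lemma chain'_le_of_mem_splitRuns {l r : List ℕ} (h : r ∈ splitRuns l) : r.Chain' (· ≤ ·) :=
  (goodRuns_splitRuns l).1 r h

lemma chain'_Bd_splitRuns (l : List ℕ) : (splitRuns l).Chain' Bd :=
  (goodRuns_splitRuns l).2

/-- descents = number of runs minus one -/
lemma des_cons_eq (x : ℕ) (l : List ℕ) :
    des (x :: l) + 1 = (splitRuns (x :: l)).length := by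
  induction l generalizing x with
  | nil => simp [splitRuns]
  | cons y t ih =>
    obtain ⟨r, rs, h⟩ := splitRuns_cons y t
    rw [splitRuns_cons_cons, des_cons_cons]
    by_cases hxy : x ≤ y
    · have : ¬ y < x := by omega
      simp only [if_pos hxy, if_neg this, h]
      rw [List.length_cons, List.tail_cons, ← Nat.zero_add (des (y::t))]
      rw [Nat.zero_add, Nat.zero_add, ih y, h]
      simp
    · have : y < x := by omega
      simp only [if_neg hxy, if_pos this]
      rw [List.length_cons, ← ih y]
      omega

/-- splitRuns of a sorted nonempty list -/
lemma splitRuns_of_chain' (x : ℕ) (l : List ℕ) (h : (x :: l).Chain' (· ≤ ·)) :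
    splitRuns (x :: l) = [x :: l] := by
  induction l generalizing x with
  | nil => rfl
  | cons y t ih =>
    simp only [List.Chain', List.isChain_cons_cons] at h
    rw [splitRuns_cons_cons, if_pos h.1, ih y h.2]
    simp

/-- splitRuns of a run followed by more stuff -/
lemma splitRuns_append (x : ℕ) (l v : List ℕ) (hv : v ≠ [])
    (hlt : hd0 v < lst0 (x :: l)) (hc : (x :: l).Chain' (· ≤ ·)) :
    splitRuns (x :: l ++ v) = (x :: l) :: splitRuns v := by
  induction l generalizing x with
  | nil =>
    rcases v with _ | ⟨hv', tv⟩
    · simp at hv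
    · simp only [lst0_singleton, hd0_cons] at hlt
      rw [List.singleton_append, splitRuns_cons_cons, if_neg (by omega)]
  | cons y t ih =>
    simp only [List.Chain', List.isChain_cons_cons] at hc
    have hlt' : hd0 v < lst0 (y :: t) := by simpa using hlt
    have := ih y hlt' hc.2
    rw [List.cons_append, List.cons_append, splitRuns_cons_cons]
    simp only [List.cons_append] at this
    rw [if_pos hc.1, this]
    simp

lemma hd0_flatten_cons (s : List ℕ) (R : List (List ℕ)) (hs : s ≠ []) :
    hd0 ((s :: R).flatten) = hd0 s := by
  rcases s with _ | ⟨a, t⟩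
  · simp at hs
  · simp [hd0]

/-- splitRuns of a flatten of good runs recovers the runs. -/
lemma splitRuns_flatten (R : List (List ℕ)) (hne : ∀ r ∈ R, r ≠ [])
    (hch : ∀ r ∈ R, r.Chain' (· ≤ ·)) (hbd : R.Chain' Bd) :
    splitRuns R.flatten = R := by
  induction R with
  | nil => rfl
  | cons r R ih =>
    rcases r with _ | ⟨x, l⟩
    · exact absurd rfl (hne [] (by simp))
    rcases R with _ | ⟨s, R'⟩
    · simpa using splitRuns_of_chain' x l (hch _ (by simp))
    · have hs : s ≠ [] := hne s (by simp)
      have hfl : (s :: R').flatten ≠ [] := by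
        rcases s with _ | ⟨a, t⟩
        · simp at hs
        · simp
      rw [List.flatten_cons, splitRuns_append x l _ hfl ?_ (hch _ (by simp))]
      · rw [ih (fun r h => hne r (by simp [h]))
          (fun r h => hch r (by simp [h])) (List.isChain_cons_cons.1 hbd).2]
      · rw [hd0_flatten_cons s R' hs]
        exact (List.isChain_cons_cons.1 hbd).1

lemma splitRuns_ne_nil {l : List ℕ} (h : l ≠ []) : splitRuns l ≠ [] := by
  rcases l with _ | ⟨x, t⟩
  · simp at h
  · obtain ⟨r, rs, h'⟩ := splitRuns_cons x t
    simp [h']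

/-- uniqueness of decomposition into maximal runs, for nodup words -/
lemma runs_unique_aux (N : ℕ) : ∀ (w : List ℕ), w.length ≤ N → w.Nodup → ∀ (R : List (List ℕ)),
    R.Perm (splitRuns w) → R.flatten = w → R = splitRuns w := by
  induction N with
  | zero =>
    intro w hlen _ R hperm hfl
    have hw : w = [] := List.eq_nil_of_length_eq_zero (Nat.le_zero.1 hlen)
    subst hw
    have : splitRuns ([] : List ℕ) = [] := rfl
    rw [this] at hperm ⊢
    exact List.Perm.eq_nil hperm
  | succ N ihN =>
  intro w hlenN hw R hperm hfl
  rcases w with _ | ⟨a, t⟩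
  · have : splitRuns ([] : List ℕ) = [] := rfl
    rw [this] at hperm ⊢
    exact List.Perm.eq_nil hperm
  · obtain ⟨r1, rs, hsp⟩ := splitRuns_cons a t
    rcases R with _ | ⟨s, S⟩
    · exact absurd (hperm.symm.eq_nil) (by simp [hsp])
    -- s is nonempty and starts with a
    have hsmem : s ∈ splitRuns (a :: t) := hperm.subset (by simp)
    have hsne : s ≠ [] := ne_nil_of_mem_splitRuns hsmem
    rcases s with _ | ⟨b, s'⟩
    · simp at hsne
    have hb : b = a := by
      have : ((b :: s') :: S).flatten = a :: t := hfl
      simpa using congrArg hd0 this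
    subst hb
    -- s must equal r1 = a :: r (else a appears twice)
    have hs_eq : b :: s' = b :: r1 := by
      rw [hsp] at hsmem
      rcases List.mem_cons.1 hsmem with h | h
      · exact h
      · -- a ∈ flatten rs and a ∈ b :: r1, contradiction with nodup
        exfalso
        have h1 : b ∈ rs.flatten := List.mem_flatten.2 ⟨b :: s', h, by simp⟩
        have h2 : (b :: t).Nodup := hw
        have : ((b :: r1) :: rs).flatten = b :: t := by rw [← hsp]; simp
        rw [← this] at h2
        simp only [List.flatten_cons, List.nodup_append] at h2
        exact h2.2.2 _ (by simp) _ h1 rfl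
    rw [hs_eq] at hperm hfl ⊢
    rw [hsp]
    -- now cancel and recurse
    have hScons : S.Perm rs := by
      have h4 := hperm
      rw [hsp] at h4
      exact h4.cons_inv
    -- flatten S = flatten rs =: w'
    have hfl' : S.flatten = rs.flatten := by
      have : (b :: r1) ++ S.flatten = (b :: r1) ++ rs.flatten := by
        have h2 : ((b :: r1) :: rs).flatten = b :: t := by rw [← hsp]; simp
        simp only [List.flatten_cons] at hfl h2 ⊢
        rw [hfl, h2]
      exact List.append_cancel_left this
    have hrs : rs = splitRuns rs.flatten := by
      refine (splitRuns_flatten rs ?_ ?_ ?_).symm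
      · intro r h; exact ne_nil_of_mem_splitRuns (by rw [hsp]; exact List.mem_cons_of_mem _ h)
      · intro r h; exact chain'_le_of_mem_splitRuns (l := b :: t) (by rw [hsp]; exact List.mem_cons_of_mem _ h)
      · have := chain'_Bd_splitRuns (b :: t); rw [hsp] at this
        exact this.tail
    have hlen : rs.flatten.length < (b :: t).length := by
      have : ((b :: r1) :: rs).flatten = b :: t := by rw [← hsp]; simp
      rw [← this]
      simp
    have hnd : rs.flatten.Nodup := by
      have : ((b :: r1) :: rs).flatten = b :: t := by rw [← hsp]; simp
      have h2 := hw
      rw [← this] at h2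
      simp only [List.flatten_cons, List.nodup_append] at h2
      exact h2.2.1
    have hlen2 : rs.flatten.length ≤ N := by
      have h3 : (b :: t).length ≤ N + 1 := hlenN
      omega
    have := ihN rs.flatten hlen2 hnd S (by rw [← hrs]; exact hScons) hfl'
    rw [this, ← hrs]

/-- Rearrange the maximal increasing runs of a word in lexicographic order. -/
def runsort (w : List ℕ) : List ℕ := ((splitRuns w).mergeSort lexLe).flatten

/-- A word is run-sorted if its runs already appear in lexicographic order. -/
def IsRunSorted (w : List ℕ) : Prop := runsort w = w

lemma lexLe_trans : ∀ (a b c : List ℕ), lexLe a b = true → lexLe b c = true → lexLe a c = true := by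
  intro a
  induction a with
  | nil => intro b c _ _; rfl
  | cons x as ih =>
    intro b c hab hbc
    rcases b with _ | ⟨y, bs⟩
    · simp [lexLe] at hab
    rcases c with _ | ⟨z, cs⟩
    · simp [lexLe] at hbc
    simp only [lexLe, Bool.or_eq_true, decide_eq_true_eq, Bool.and_eq_true, beq_iff_eq] at *
    rcases hab with h1 | ⟨h1, h1'⟩ <;> rcases hbc with h2 | ⟨h2, h2'⟩
    · exact Or.inl (h1.trans h2)
    · exact Or.inl (h2 ▸ h1)
    · exact Or.inl (h1 ▸ h2)
    · exact Or.inr ⟨h1.trans h2, ih bs cs h1' h2'⟩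

lemma lexLe_total : ∀ (a b : List ℕ), (lexLe a b || lexLe b a) = true := by
  intro a
  induction a with
  | nil => intro b; simp [lexLe]
  | cons x as ih =>
    intro b
    rcases b with _ | ⟨y, bs⟩
    · simp [lexLe]
    simp only [lexLe, Bool.or_eq_true, decide_eq_true_eq, Bool.and_eq_true, beq_iff_eq]
    rcases Nat.lt_trichotomy x y with h | h | h
    · tauto
    · subst h
      have := ih bs
      simp only [Bool.or_eq_true] at this
      tauto
    · tauto

lemma lexLe_of_lt {a b : ℕ} (h : a < b) (as bs : List ℕ) : lexLe (a :: as) (b :: bs) = true := by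
  simp [lexLe, h]

lemma le_of_lexLe {a b : ℕ} {as bs : List ℕ} (h : lexLe (a :: as) (b :: bs) = true) : a ≤ b := by
  simp only [lexLe, Bool.or_eq_true, decide_eq_true_eq, Bool.and_eq_true, beq_iff_eq] at h
  rcases h with h | ⟨h, _⟩ <;> omega

lemma isRunSorted_iff_pairwise {w : List ℕ} (hw : w.Nodup) :
    IsRunSorted w ↔ (splitRuns w).Pairwise (fun r s => lexLe r s = true) := by
  constructor
  · intro h
    have hms : (splitRuns w).mergeSort lexLe = splitRuns w :=
      runs_unique_aux w.length w le_rfl hw _ (List.mergeSort_perm _ _) h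
    have := List.pairwise_mergeSort (le := lexLe) (fun a b c => lexLe_trans a b c)
      (fun a b => lexLe_total a b) (splitRuns w)
    rwa [hms] at this
  · intro h
    unfold IsRunSorted runsort
    rw [List.mergeSort_of_pairwise h, flatten_splitRuns]

instance : DecidablePred IsRunSorted := fun w => inferInstanceAs (Decidable (runsort w = w))

/-- run-sorted words with value set V -/
def RSPW (V : Finset ℕ) : Finset (List ℕ) :=
  (V.sort (· ≤ ·)).permutations.toFinset.filter IsRunSorted

lemma mem_RSPW {V : Finset ℕ} {w : List ℕ} :
    w ∈ RSPW V ↔ w.Perm (V.sort (· ≤ ·)) ∧ IsRunSorted w := by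
  simp [RSPW, List.mem_permutations]

lemma nodup_of_mem_RSPW {V : Finset ℕ} {w : List ℕ} (h : w ∈ RSPW V) : w.Nodup :=
  ((mem_RSPW.1 h).1.nodup_iff).2 (V.sort_nodup _)

lemma toFinset_of_mem_RSPW {V : Finset ℕ} {w : List ℕ} (h : w ∈ RSPW V) : w.toFinset = V := by
  rw [List.toFinset_eq_of_perm _ _ (mem_RSPW.1 h).1, Finset.sort_toFinset]

lemma mem_RSPW_of {V : Finset ℕ} {w : List ℕ} (h1 : w.Nodup) (h2 : w.toFinset = V)
    (h3 : IsRunSorted w) : w ∈ RSPW V := by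
  refine mem_RSPW.2 ⟨?_, h3⟩
  exact List.perm_of_nodup_nodup_toFinset_eq h1 (V.sort_nodup _) (by rw [h2, Finset.sort_toFinset])

lemma length_of_mem_RSPW {V : Finset ℕ} {w : List ℕ} (h : w ∈ RSPW V) : w.length = V.card := by
  rw [(mem_RSPW.1 h).1.length_eq, Finset.length_sort]

lemma run_head_le {r : List ℕ} (hc : r.Chain' (· ≤ ·)) : ∀ x ∈ r, hd0 r ≤ x := by
  rcases r with _ | ⟨c, r'⟩
  · simp
  · intro x hx
    rcases List.mem_cons.1 hx with h | h
    · simp [h]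
    · have := (List.isChain_iff_pairwise.1 hc)
      exact (List.pairwise_cons.1 this).1 x h

lemma run_le_last {r : List ℕ} (hc : r.Chain' (· ≤ ·)) : ∀ x ∈ r, x ≤ lst0 r := by
  induction r with
  | nil => simp
  | cons c r' ih =>
    intro x hx
    rcases r' with _ | ⟨d, r''⟩
    · simp at hx; simp [hx]
    · simp only [List.Chain', List.isChain_cons_cons] at hc
      rw [lst0_cons_cons]
      rcases List.mem_cons.1 hx with h | h
      · subst h
        exact le_trans hc.1 (ih hc.2 d (by simp))
      · exact ih hc.2 x h

/-- the head of a run-sorted word is the minimum of its letters -/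
lemma hd0_eq_min {w : List ℕ} (hw : w.Nodup) (hrs : IsRunSorted w) {m : ℕ}
    (hm : m ∈ w) (hmin : ∀ x ∈ w, m ≤ x) : hd0 w = m := by
  rcases w with _ | ⟨a, t⟩
  · simp at hm
  obtain ⟨r1, rs, hsp⟩ := splitRuns_cons a t
  have hpw := (isRunSorted_iff_pairwise hw).1 hrs
  rw [hsp] at hpw
  -- the run containing m
  have hmem : m ∈ ((a :: r1) :: rs).flatten := by
    rw [← hsp, flatten_splitRuns]; exact hm
  obtain ⟨rt, hrt, hmrt⟩ := List.mem_flatten.1 hmem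
  have hrt' : rt ∈ splitRuns (a :: t) := by rw [hsp]; exact hrt
  have hchain := chain'_le_of_mem_splitRuns hrt'
  have hhd_le : hd0 rt ≤ m := run_head_le hchain m hmrt
  have hsub : ∀ x ∈ rt, x ∈ a :: t := by
    intro x hx
    rw [← flatten_splitRuns (a :: t)]
    exact List.mem_flatten.2 ⟨rt, hrt', hx⟩
  -- a ≤ hd0 rt
  have ha_le : a ≤ hd0 rt := by
    rcases List.mem_cons.1 hrt with h | h
    · rw [h]; simp
    · rcases rt with _ | ⟨c, rt'⟩
      · exact absurd rfl (ne_nil_of_mem_splitRuns hrt')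
      · have hlex := (List.pairwise_cons.1 hpw).1 _ h
        simpa using le_of_lexLe hlex
  have hma : m ≤ a := hmin a (by simp)
  have : a = m := by omega
  simp [this]

section Standardize

variable {f : ℕ → ℕ}

lemma des_map {w : List ℕ} (hf : ∀ x ∈ w, ∀ y ∈ w, (f x ≤ f y ↔ x ≤ y)) :
    des (w.map f) = des w := by
  match w with
  | [] => rfl
  | [x] => rfl
  | x :: y :: t =>
    have ih := des_map (w := y :: t) (fun a ha b hb => hf a (by simp_all) b (by simp_all))
    simp only [List.map_cons] at ih ⊢
    rw [des_cons_cons, des_cons_cons, ih]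
    have h1 : f y < f x ↔ y < x := by
      have := hf x (by simp) y (by simp)
      have := hf y (by simp) x (by simp)
      omega
    by_cases h : y < x
    · rw [if_pos h, if_pos (h1.2 h)]
    · rw [if_neg h, if_neg (fun hc => h (h1.1 hc))]

lemma splitRuns_map {w : List ℕ} (hf : ∀ x ∈ w, ∀ y ∈ w, (f x ≤ f y ↔ x ≤ y)) :
    splitRuns (w.map f) = (splitRuns w).map (List.map f) := by
  match w with
  | [] => rfl
  | [x] => rfl
  | x :: y :: t =>
    have ih := splitRuns_map (w := y :: t) (fun a ha b hb => hf a (by simp_all) b (by simp_all))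
    obtain ⟨r, rs, h⟩ := splitRuns_cons y t
    rw [h] at ih
    simp only [List.map_cons] at ih ⊢
    have hxy : f x ≤ f y ↔ x ≤ y := hf x (by simp) y (by simp)
    rw [splitRuns_cons_cons, splitRuns_cons_cons, h, ih]
    by_cases hc : x ≤ y
    · simp [hc, hxy.2 hc]
    · have : ¬ f x ≤ f y := fun hcc => hc (hxy.1 hcc)
      simp [hc, this]

lemma lexLe_map {w r s : List ℕ} (hf : ∀ x ∈ w, ∀ y ∈ w, (f x ≤ f y ↔ x ≤ y))
    (hr : ∀ x ∈ r, x ∈ w) (hs : ∀ x ∈ s, x ∈ w) :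
    lexLe (r.map f) (s.map f) = lexLe r s := by
  induction r generalizing s with
  | nil => simp [lexLe]
  | cons a as ih =>
    rcases s with _ | ⟨b, bs⟩
    · simp [lexLe]
    · have hab : f a ≤ f b ↔ a ≤ b := hf a (hr a (by simp)) b (hs b (by simp))
      have hba : f b ≤ f a ↔ b ≤ a := hf b (hs b (by simp)) a (hr a (by simp))
      have h1 : decide (f a < f b) = decide (a < b) := by
        apply decide_eq_decide.2; omega
      have h2 : (f a == f b) = (a == b) := by
        rw [Bool.eq_iff_iff]; simp only [beq_iff_eq]; omega
      simp only [List.map_cons, lexLe]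
      rw [ih (fun x hx => hr x (by simp [hx])) (fun x hx => hs x (by simp [hx])), h1, h2]

end Standardize

lemma mem_of_mem_splitRuns {w r : List ℕ} (hr : r ∈ splitRuns w) : ∀ x ∈ r, x ∈ w := by
  intro x hx
  rw [← flatten_splitRuns w]
  exact List.mem_flatten.2 ⟨r, hr, hx⟩

lemma nodup_map_of {f : ℕ → ℕ} {w : List ℕ} (hw : w.Nodup)
    (hf : ∀ x ∈ w, ∀ y ∈ w, (f x ≤ f y ↔ x ≤ y)) : (w.map f).Nodup := by
  refine List.Nodup.map_on ?_ hw
  intro x hx y hy hxy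
  have h1 := hf x hx y hy
  have h2 := hf y hy x hx
  omega

lemma isRunSorted_map {f : ℕ → ℕ} {w : List ℕ} (hw : w.Nodup)
    (hf : ∀ x ∈ w, ∀ y ∈ w, (f x ≤ f y ↔ x ≤ y)) :
    IsRunSorted (w.map f) ↔ IsRunSorted w := by
  rw [isRunSorted_iff_pairwise hw, isRunSorted_iff_pairwise (nodup_map_of hw hf),
    splitRuns_map hf, List.pairwise_map]
  constructor
  · intro h
    exact h.imp_of_mem (fun {r s} hr hs hx => by
      rwa [lexLe_map hf (mem_of_mem_splitRuns hr) (mem_of_mem_splitRuns hs)] at hx)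
  · intro h
    exact h.imp_of_mem (fun {r s} hr hs hx => by
      rwa [lexLe_map hf (mem_of_mem_splitRuns hr) (mem_of_mem_splitRuns hs)])

lemma list_toFinset_map (f : ℕ → ℕ) (l : List ℕ) :
    (l.map f).toFinset = Finset.image f l.toFinset := by
  ext x; simp

noncomputable def P (V : Finset ℕ) : Polynomial ℝ := ∑ w ∈ RSPW V, Polynomial.X ^ des w

lemma P_map (V : Finset ℕ) (f g : ℕ → ℕ) (hfg : ∀ x ∈ V, g (f x) = x)
    (hmono : ∀ x ∈ V, ∀ y ∈ V, (f x ≤ f y ↔ x ≤ y)) : P (V.image f) = P V := by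
  have hgmono : ∀ u ∈ V.image f, ∀ v ∈ V.image f, (g u ≤ g v ↔ u ≤ v) := by
    intro u hu v hv
    obtain ⟨x, hx, rfl⟩ := Finset.mem_image.1 hu
    obtain ⟨y, hy, rfl⟩ := Finset.mem_image.1 hv
    rw [hfg x hx, hfg y hy]
    exact (hmono x hx y hy).symm
  have hgf : ∀ u ∈ V.image f, f (g u) = u := by
    intro u hu
    obtain ⟨x, hx, rfl⟩ := Finset.mem_image.1 hu
    rw [hfg x hx]
  symm
  refine Finset.sum_nbij' (fun w => w.map f) (fun w => w.map g) ?_ ?_ ?_ ?_ ?_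
  · intro w hwm
    have hnd := nodup_of_mem_RSPW hwm
    have htf := toFinset_of_mem_RSPW hwm
    have hmem : ∀ x ∈ w, x ∈ V := fun x hx => htf ▸ List.mem_toFinset.2 hx
    have hf' : ∀ x ∈ w, ∀ y ∈ w, (f x ≤ f y ↔ x ≤ y) :=
      fun x hx y hy => hmono x (hmem x hx) y (hmem y hy)
    refine mem_RSPW_of (nodup_map_of hnd hf') ?_ ((isRunSorted_map hnd hf').2 (mem_RSPW.1 hwm).2)
    rw [list_toFinset_map, htf]
  · intro w hwm
    have hnd := nodup_of_mem_RSPW hwm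
    have htf := toFinset_of_mem_RSPW hwm
    have hmem : ∀ x ∈ w, x ∈ V.image f := fun x hx => htf ▸ List.mem_toFinset.2 hx
    have hg' : ∀ x ∈ w, ∀ y ∈ w, (g x ≤ g y ↔ x ≤ y) :=
      fun x hx y hy => hgmono x (hmem x hx) y (hmem y hy)
    refine mem_RSPW_of (nodup_map_of hnd hg') ?_ ((isRunSorted_map hnd hg').2 (mem_RSPW.1 hwm).2)
    rw [list_toFinset_map, htf]
    ext u
    simp only [Finset.mem_image]
    constructor
    · rintro ⟨v, hv, rfl⟩
      obtain ⟨x, hx, rfl⟩ := hv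
      rw [hfg x hx]; exact hx
    · intro hu
      exact ⟨f u, ⟨u, hu, rfl⟩, hfg u hu⟩
  · intro w hwm
    have htf := toFinset_of_mem_RSPW hwm
    have hmem : ∀ x ∈ w, x ∈ V := fun x hx => htf ▸ List.mem_toFinset.2 hx
    show (w.map f).map g = w
    rw [List.map_map]
    exact List.map_congr_left (fun x hx => by simp [hfg x (hmem x hx)]) |>.trans w.map_id
  · intro w hwm
    have htf := toFinset_of_mem_RSPW hwm
    have hmem : ∀ x ∈ w, x ∈ V.image f := fun x hx => htf ▸ List.mem_toFinset.2 hx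
    show (w.map g).map f = w
    rw [List.map_map]
    exact List.map_congr_left (fun x hx => by simp [hgf x (hmem x hx)]) |>.trans w.map_id
  · intro w hwm
    have htf := toFinset_of_mem_RSPW hwm
    have hmem : ∀ x ∈ w, x ∈ V := fun x hx => htf ▸ List.mem_toFinset.2 hx
    rw [des_map (fun x hx y hy => hmono x (hmem x hx) y (hmem y hy))]

lemma P_eq_P_card (V : Finset ℕ) : P V = P (Finset.Icc 1 V.card) := by
  set e := V.orderIsoOfFin rfl with he
  set f : ℕ → ℕ := fun x => if h : x ∈ V then (e.symm ⟨x, h⟩ : ℕ) + 1 else 0 with hf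
  set g : ℕ → ℕ := fun y => if h : y - 1 < V.card then (e ⟨y - 1, h⟩ : ℕ) else 0 with hg
  have hfg : ∀ x ∈ V, g (f x) = x := by
    intro x hx
    simp only [hf, hg, dif_pos hx]
    have h1 : (e.symm ⟨x, hx⟩ : Fin V.card) < V.card := (e.symm ⟨x, hx⟩).isLt
    rw [dif_pos (by simpa using h1)]
    have : (⟨(e.symm ⟨x, hx⟩ : ℕ) + 1 - 1, by simpa using h1⟩ : Fin V.card) = e.symm ⟨x, hx⟩ := by
      ext; simp
    rw [this]
    simp
  have hmono : ∀ x ∈ V, ∀ y ∈ V, (f x ≤ f y ↔ x ≤ y) := by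
    intro x hx y hy
    simp only [hf, dif_pos hx, dif_pos hy]
    rw [Nat.add_le_add_iff_right]
    rw [← Fin.le_def, OrderIso.le_iff_le]
    simp [Subtype.mk_le_mk]
  have himg : V.image f = Finset.Icc 1 V.card := by
    ext u
    simp only [Finset.mem_image, Finset.mem_Icc]
    constructor
    · rintro ⟨x, hx, rfl⟩
      simp only [hf, dif_pos hx]
      have := (e.symm ⟨x, hx⟩).isLt
      omega
    · rintro ⟨h1, h2⟩
      have hlt : u - 1 < V.card := by omega
      refine ⟨(e ⟨u - 1, hlt⟩ : ℕ), (e ⟨u - 1, hlt⟩).2, ?_⟩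
      simp only [hf, dif_pos (e ⟨u - 1, hlt⟩).2]
      have h0 : (⟨(e ⟨u - 1, hlt⟩ : ℕ), (e ⟨u - 1, hlt⟩).2⟩ : {x // x ∈ V}) = e ⟨u - 1, hlt⟩ :=
        Subtype.ext rfl
      rw [h0, OrderIso.symm_apply_apply]
      simp only [Fin.val_mk]
      omega
  rw [← himg, P_map V f g hfg hmono]

open Classical in
/-- index set for the recursion: possible value sets of the word after the first run -/
noncomputable def Dn (n : ℕ) : Finset (Finset ℕ) :=
  (Finset.Icc 2 n).powerset.filter
    (fun W => W.Nonempty ∧ ∃ a ∈ W, ∃ b ∈ Finset.Icc 1 n \ W, a < b)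

lemma mem_Dn {n : ℕ} {W : Finset ℕ} : W ∈ Dn n ↔
    W ⊆ Finset.Icc 2 n ∧ W.Nonempty ∧ ∃ a ∈ W, ∃ b ∈ Finset.Icc 1 n \ W, a < b := by
  simp only [Dn, Finset.mem_filter, Finset.mem_powerset]

lemma lst0_mem {l : List ℕ} (h : l ≠ []) : lst0 l ∈ l := by
  rw [lst0, List.getLast?_eq_getLast h]
  exact List.getLast_mem h

lemma hd0_mem {l : List ℕ} (h : l ≠ []) : hd0 l ∈ l := by
  rcases l with _ | ⟨a, t⟩
  · simp at h
  · simp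

lemma sort_chain' (V : Finset ℕ) : (V.sort (· ≤ ·)).Chain' (· ≤ ·) :=
  List.isChain_iff_pairwise.2 (V.pairwise_sort (· ≤ ·))

lemma forward_facts {n : ℕ} {w : List ℕ} (hw : w ∈ RSPW (Finset.Icc 1 n)) (hd : des w ≠ 0) :
    (splitRuns w).tail.flatten ≠ [] ∧
    (splitRuns w).tail.flatten.toFinset ∈ Dn n ∧
    (splitRuns w).tail.flatten ∈ RSPW ((splitRuns w).tail.flatten.toFinset) ∧
    des w = des ((splitRuns w).tail.flatten) + 1 ∧
    ((Finset.Icc 1 n \ (splitRuns w).tail.flatten.toFinset).sort (· ≤ ·)) ++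
      (splitRuns w).tail.flatten = w := by
  have hnd := nodup_of_mem_RSPW hw
  have htf := toFinset_of_mem_RSPW hw
  have hrs := (mem_RSPW.1 hw).2
  have hpw := (isRunSorted_iff_pairwise hnd).1 hrs
  rcases w with _ | ⟨a, t⟩
  · simp [des] at hd
  obtain ⟨r, rs, hsp⟩ := splitRuns_cons a t
  set r1 : List ℕ := a :: r with hr1
  set w' : List ℕ := rs.flatten with hw'
  have htail : (splitRuns (a :: t)).tail.flatten = w' := by rw [hsp]; rfl
  rw [htail]
  -- basic decomposition
  have hflat : r1 ++ w' = a :: t := by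
    have := flatten_splitRuns (a :: t)
    rw [hsp] at this
    simpa using this
  -- number of runs
  have hlen : des (a :: t) + 1 = rs.length + 1 := by
    rw [des_cons_eq, hsp]; simp
  have hrs_ne : rs ≠ [] := by
    intro h
    rw [h] at hlen
    simp at hlen
    exact hd (by simpa using hlen)
  -- properties of the runs
  have hchBd := chain'_Bd_splitRuns (a :: t)
  rw [hsp] at hchBd
  have hne_runs : ∀ s ∈ rs, s ≠ [] := fun s hs =>
    ne_nil_of_mem_splitRuns (l := a :: t) (by rw [hsp]; exact List.mem_cons_of_mem _ hs)
  have hch_runs : ∀ s ∈ rs, s.Chain' (· ≤ ·) := fun s hs =>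
    chain'_le_of_mem_splitRuns (l := a :: t) (by rw [hsp]; exact List.mem_cons_of_mem _ hs)
  have hsp' : splitRuns w' = rs := splitRuns_flatten rs hne_runs hch_runs hchBd.tail
  -- w' nonempty
  obtain ⟨s0, rs', hrs0⟩ : ∃ s0 rs', rs = s0 :: rs' := by
    rcases rs with _ | ⟨s0, rs'⟩
    · exact absurd rfl hrs_ne
    · exact ⟨s0, rs', rfl⟩
  have hs0ne : s0 ≠ [] := hne_runs s0 (by rw [hrs0]; simp)
  have hw'ne : w' ≠ [] := by
    rw [hw', hrs0]
    rcases s0 with _ | ⟨c, t'⟩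
    · simp at hs0ne
    · simp
  -- nodup pieces
  have hnd2 : r1.Nodup ∧ w'.Nodup ∧ r1.Disjoint w' := by
    have := hnd
    rw [← hflat, List.nodup_append'] at this
    exact this
  -- toFinset pieces
  have htfsplit : r1.toFinset ∪ w'.toFinset = Finset.Icc 1 n := by
    rw [← htf, ← hflat]
    ext x; simp
  have hdisj : Disjoint r1.toFinset w'.toFinset := by
    rw [Finset.disjoint_left]
    intro x hx1 hx2
    exact hnd2.2.2 (List.mem_toFinset.1 hx1) (List.mem_toFinset.1 hx2)
  have hWsub : w'.toFinset ⊆ Finset.Icc 1 n := by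
    rw [← htfsplit]; exact Finset.subset_union_right
  have hVW : Finset.Icc 1 n \ w'.toFinset = r1.toFinset := by
    rw [← htfsplit, Finset.union_sdiff_cancel_right hdisj]
  -- a = 1
  have han : 1 ≤ n := by
    have : a ∈ Finset.Icc 1 n := htf ▸ (by simp)
    simp at this
    omega
  have ha1 : a = 1 := by
    have h1 : hd0 (a :: t) = 1 := by
      apply hd0_eq_min hnd hrs
      · rw [← List.mem_toFinset, htf]; simp [han]
      · intro x hx
        have : x ∈ Finset.Icc 1 n := htf ▸ List.mem_toFinset.2 hx
        simp at this; omega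
    simpa using h1
  -- W ⊆ Icc 2 n
  have hWsub2 : w'.toFinset ⊆ Finset.Icc 2 n := by
    intro x hx
    have hx1 : x ∈ Finset.Icc 1 n := hWsub hx
    simp only [Finset.mem_Icc] at hx1 ⊢
    refine ⟨?_, hx1.2⟩
    rcases Nat.lt_or_ge x 2 with h | h
    · exfalso
      have : x = 1 := by omega
      subst this
      exact hnd2.2.2 (by rw [hr1, ha1]; simp) (List.mem_toFinset.1 hx)
    · exact h
  -- the boundary gives the existence condition
  have hbd : hd0 w' < lst0 r1 := by
    have hchBd' := hchBd
    rw [hrs0] at hchBd'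
    have hBd : Bd r1 s0 := (List.isChain_cons_cons.1 hchBd').1
    have heq : hd0 w' = hd0 s0 := by rw [hw', hrs0]; exact hd0_flatten_cons s0 rs' hs0ne
    rw [heq]
    exact hBd
  have hlst_mem : lst0 r1 ∈ r1 := lst0_mem (by simp [hr1])
  have hhd_mem : hd0 w' ∈ w' := hd0_mem hw'ne
  have hmemD : w'.toFinset ∈ Dn n := by
    rw [mem_Dn]
    refine ⟨hWsub2, ⟨⟨hd0 w', List.mem_toFinset.2 hhd_mem⟩, hd0 w', List.mem_toFinset.2 hhd_mem,
      lst0 r1, ?_, hbd⟩⟩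
    rw [hVW]
    exact List.mem_toFinset.2 hlst_mem
  -- w' ∈ RSPW W
  have hw'mem : w' ∈ RSPW w'.toFinset := by
    refine mem_RSPW_of hnd2.2.1 rfl ?_
    rw [isRunSorted_iff_pairwise hnd2.2.1, hsp']
    have hpw2 := hpw
    rw [hsp] at hpw2
    exact hpw2.of_cons
  -- des
  have hdes : des (a :: t) = des w' + 1 := by
    obtain ⟨c, t', hct⟩ : ∃ c t', w' = c :: t' := by
      rcases w' with _ | ⟨c, t'⟩
      · exact absurd rfl hw'ne
      · exact ⟨c, t', rfl⟩
    have h2 : des w' + 1 = rs.length := by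
      rw [hct, des_cons_eq, ← hct, hsp']
    omega
  -- first run is the sort of its values
  haveI : IsAntisymm ℕ (fun x1 x2 => x1 ≤ x2) := ⟨fun _ _ h h' => Nat.le_antisymm h h'⟩
  have hr1sort : r1 = (Finset.Icc 1 n \ w'.toFinset).sort (· ≤ ·) := by
    rw [hVW]
    refine List.Perm.eq_of_pairwise (le := (· ≤ ·)) (fun a b _ _ h h' => Nat.le_antisymm h h') ?_ ?_
      (List.perm_of_nodup_nodup_toFinset_eq hnd2.1 (Finset.sort_nodup _ _)
        (by rw [Finset.sort_toFinset]))
    · exact List.isChain_iff_pairwise.1 (chain'_le_of_mem_splitRuns (l := a :: t)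
        (by rw [hsp]; simp))
    · exact Finset.pairwise_sort _ _
  exact ⟨hw'ne, hmemD, hw'mem, hdes, by rw [← hr1sort]; exact hflat⟩

lemma backward_facts {n : ℕ} {W : Finset ℕ} (hW : W ∈ Dn n) {w' : List ℕ}
    (hw' : w' ∈ RSPW W) :
    ((Finset.Icc 1 n \ W).sort (· ≤ ·) ++ w') ∈ RSPW (Finset.Icc 1 n) ∧
    des ((Finset.Icc 1 n \ W).sort (· ≤ ·) ++ w') = des w' + 1 ∧
    splitRuns ((Finset.Icc 1 n \ W).sort (· ≤ ·) ++ w') =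
      ((Finset.Icc 1 n \ W).sort (· ≤ ·)) :: splitRuns w' := by
  obtain ⟨hWsub, hWne, a0, ha0, b0, hb0, hab⟩ := mem_Dn.1 hW
  have hWsub1 : W ⊆ Finset.Icc 1 n := hWsub.trans (by
    intro x hx; simp at hx ⊢; omega)
  set C := Finset.Icc 1 n \ W with hC
  set u := C.sort (· ≤ ·) with hu
  have hb0C : b0 ∈ C := hb0
  have hb0u : b0 ∈ u := (Finset.mem_sort _).2 hb0C
  have huch : u.Chain' (· ≤ ·) := sort_chain' C
  have hund : u.Nodup := C.sort_nodup _
  have hutf : u.toFinset = C := C.sort_toFinset _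
  -- w' facts
  have hw'nd : w'.Nodup := nodup_of_mem_RSPW hw'
  have hw'tf : w'.toFinset = W := toFinset_of_mem_RSPW hw'
  have hw'rs : IsRunSorted w' := (mem_RSPW.1 hw').2
  have hw'ne : w' ≠ [] := by
    intro h
    rw [h] at hw'tf
    simp at hw'tf
    exact hWne.ne_empty hw'tf.symm
  -- n ≥ 1
  have hn1 : 1 ≤ n := by
    have := hWsub1 ha0
    simp at this
    omega
  -- 1 ∈ C
  have h1C : (1 : ℕ) ∈ C := by
    rw [hC, Finset.mem_sdiff]
    refine ⟨by simp [hn1], fun h => ?_⟩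
    have := hWsub h
    simp at this
  -- membership transfers
  have hmemw' : ∀ x ∈ w', x ∈ W := fun x hx => hw'tf ▸ List.mem_toFinset.2 hx
  have hmemu : ∀ x ∈ u, x ∈ C := fun x hx => hutf ▸ List.mem_toFinset.2 hx
  -- head of w' is the min of W
  have hhd : hd0 w' = W.min' hWne := by
    apply hd0_eq_min hw'nd hw'rs
    · exact List.mem_toFinset.1 (by rw [hw'tf]; exact W.min'_mem hWne)
    · intro x hx
      exact W.min'_le x (hmemw' x hx)
  -- boundary
  have hlt : hd0 w' < lst0 u := by
    have h1 : W.min' hWne ≤ a0 := W.min'_le a0 ha0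
    have h2 : b0 ≤ lst0 u := by
      have hune : u ≠ [] := List.ne_nil_of_mem hb0u
      exact run_le_last huch b0 hb0u
    omega
  have hune : u ≠ [] := List.ne_nil_of_mem hb0u
  obtain ⟨x, l, hxl⟩ : ∃ x l, u = x :: l := by
    rcases u with _ | ⟨x, l⟩
    · exact absurd rfl hune
    · exact ⟨x, l, rfl⟩
  -- split runs of the concatenation
  have hsplit : splitRuns (u ++ w') = u :: splitRuns w' := by
    rw [hxl]
    exact splitRuns_append x l w' hw'ne (by rw [← hxl]; exact hlt) (by rw [← hxl]; exact huch)
  -- disjointness & nodup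
  have hdisj : u.Disjoint w' := by
    intro z hz1 hz2
    have h1 : z ∈ C := hmemu z hz1
    have h2 : z ∈ W := hmemw' z hz2
    rw [hC, Finset.mem_sdiff] at h1
    exact h1.2 h2
  have hwnd : (u ++ w').Nodup := List.nodup_append'.2 ⟨hund, hw'nd, hdisj⟩
  -- toFinset
  have hwtf : (u ++ w').toFinset = Finset.Icc 1 n := by
    rw [List.toFinset_append, hutf, hw'tf, hC]
    exact Finset.sdiff_union_of_subset hWsub1
  -- head of u is 1
  have hhdu : hd0 u = 1 := by
    have h1 : hd0 u ∈ C := hmemu _ (hd0_mem hune)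
    have h2 : hd0 u ≤ 1 := run_head_le huch 1 ((Finset.mem_sort _).2 h1C)
    have h3 : 1 ≤ hd0 u := by
      have := h1
      rw [hC, Finset.mem_sdiff] at this
      simp at this
      omega
    omega
  -- run-sortedness
  have hwrs : IsRunSorted (u ++ w') := by
    rw [isRunSorted_iff_pairwise hwnd, hsplit]
    rw [List.pairwise_cons]
    constructor
    · intro r hr
      have hrne : r ≠ [] := ne_nil_of_mem_splitRuns hr
      obtain ⟨c, r'', hcr⟩ : ∃ c r'', r = c :: r'' := by
        rcases r with _ | ⟨c, r''⟩
        · exact absurd rfl hrne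
        · exact ⟨c, r'', rfl⟩
      have hcW : c ∈ W := hmemw' c (mem_of_mem_splitRuns hr c (by rw [hcr]; simp))
      have hc2 : 2 ≤ c := by
        have := hWsub hcW
        simp at this
        omega
      rw [hxl] at hhdu ⊢
      simp only [hd0_cons] at hhdu
      rw [hcr, hhdu]
      exact lexLe_of_lt (by omega) l r''
    · exact (isRunSorted_iff_pairwise hw'nd).1 hw'rs
  -- membership
  have hmem : (u ++ w') ∈ RSPW (Finset.Icc 1 n) := mem_RSPW_of hwnd hwtf hwrs
  -- descents
  have hdes : des (u ++ w') = des w' + 1 := by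
    obtain ⟨c, t', hct⟩ : ∃ c t', w' = c :: t' := by
      rcases w' with _ | ⟨c, t'⟩
      · exact absurd rfl hw'ne
      · exact ⟨c, t', rfl⟩
    have h1 : des (u ++ w') + 1 = (splitRuns (u ++ w')).length := by
      rw [hxl]
      exact des_cons_eq x (l ++ w')
    have h2 : des w' + 1 = (splitRuns w').length := by
      rw [hct]
      exact des_cons_eq c t'
    rw [hsplit] at h1
    simp only [List.length_cons] at h1
    omega
  exact ⟨hmem, hdes, hsplit⟩

lemma filter_des_zero (n : ℕ) (hn : 1 ≤ n) :
    (RSPW (Finset.Icc 1 n)).filter (fun w => des w = 0) =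
      {(Finset.Icc 1 n).sort (· ≤ ·)} := by
  haveI : IsAntisymm ℕ (fun x1 x2 => x1 ≤ x2) := ⟨fun _ _ h h' => Nat.le_antisymm h h'⟩
  have hVne : (Finset.Icc 1 n).Nonempty := ⟨1, by simp [hn]⟩
  ext w
  simp only [Finset.mem_filter, Finset.mem_singleton]
  constructor
  · rintro ⟨hw, hdes⟩
    have hperm := (mem_RSPW.1 hw).1
    rcases w with _ | ⟨a, t⟩
    · exfalso
      have := hperm.symm.eq_nil
      have h1 : (1 : ℕ) ∈ (Finset.Icc 1 n).sort (· ≤ ·) := (Finset.mem_sort _).2 (by simp [hn])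
      rw [this] at h1
      simp at h1
    · have h1 : des (a :: t) + 1 = (splitRuns (a :: t)).length := des_cons_eq a t
      rw [hdes] at h1
      obtain ⟨r, rs, hsp⟩ := splitRuns_cons a t
      have hrs_nil : rs = [] := by
        rw [hsp] at h1
        simpa using (by simpa using h1.symm)
      have hflat := flatten_splitRuns (a :: t)
      rw [hsp, hrs_nil] at hflat
      simp at hflat
      have hch : (a :: t).Chain' (· ≤ ·) := by
        rw [← hflat]
        exact chain'_le_of_mem_splitRuns (l := a :: t) (by rw [hsp, hrs_nil]; simp)
      exact List.Perm.eq_of_pairwise (fun a b _ _ h h' => Nat.le_antisymm h h') (List.isChain_iff_pairwise.1 hch)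
        (Finset.pairwise_sort _ _) hperm
  · intro hw
    subst hw
    set u := (Finset.Icc 1 n).sort (· ≤ ·) with husort
    have h1u : (1:ℕ) ∈ u := (Finset.mem_sort _).2 (by simp [hn])
    have hune : u ≠ [] := List.ne_nil_of_mem h1u
    obtain ⟨x, l, hxl⟩ : ∃ x l, u = x :: l := by
      rcases u with _ | ⟨x, l⟩
      · exact absurd rfl hune
      · exact ⟨x, l, rfl⟩
    have hch : u.Chain' (· ≤ ·) := sort_chain' _
    have hsp : splitRuns u = [u] := by
      rw [hxl] at hch ⊢
      exact splitRuns_of_chain' x l hch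
    constructor
    · refine mem_RSPW_of ((Finset.Icc 1 n).sort_nodup _) ((Finset.Icc 1 n).sort_toFinset _) ?_
      rw [isRunSorted_iff_pairwise ((Finset.Icc 1 n).sort_nodup _), hsp]
      simp
    · have := des_cons_eq x l
      rw [← hxl, hsp] at this
      simp at this
      omega

lemma P_recursion (n : ℕ) (hn : 1 ≤ n) :
    P (Finset.Icc 1 n) = 1 + Polynomial.X * ∑ W ∈ Dn n, P W := by
  classical
  rw [P, ← Finset.sum_filter_add_sum_filter_not (RSPW (Finset.Icc 1 n)) (fun w => des w = 0)]
  congr 1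
  · rw [filter_des_zero n hn]
    rw [Finset.sum_singleton]
    have : des ((Finset.Icc 1 n).sort (· ≤ ·)) = 0 := by
      have := Finset.mem_filter.1 (by
        rw [filter_des_zero n hn]
        exact Finset.mem_singleton_self _)
      exact this.2
    rw [this, pow_zero]
  · -- bijection with the sigma set
    have hbij : ∑ w ∈ (RSPW (Finset.Icc 1 n)).filter (fun w => ¬ des w = 0),
        (Polynomial.X : Polynomial ℝ) ^ des w =
        ∑ p ∈ (Dn n).sigma (fun W => RSPW W), (Polynomial.X : Polynomial ℝ) ^ (des p.2 + 1) := by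
      refine Finset.sum_nbij'
        (fun w => ⟨(splitRuns w).tail.flatten.toFinset, (splitRuns w).tail.flatten⟩)
        (fun p => ((Finset.Icc 1 n \ p.1).sort (· ≤ ·)) ++ p.2) ?_ ?_ ?_ ?_ ?_
      · intro w hw
        rw [Finset.mem_filter] at hw
        obtain ⟨_, hD, hR, _, _⟩ := forward_facts hw.1 hw.2
        exact Finset.mem_sigma.2 ⟨hD, hR⟩
      · rintro ⟨W, w'⟩ hp
        rw [Finset.mem_sigma] at hp
        obtain ⟨h1, h2, _⟩ := backward_facts hp.1 hp.2
        rw [Finset.mem_filter]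
        refine ⟨h1, ?_⟩
        show ¬ des _ = 0
        rw [h2]
        omega
      · intro w hw
        rw [Finset.mem_filter] at hw
        obtain ⟨_, _, _, _, h5⟩ := forward_facts hw.1 hw.2
        exact h5
      · rintro ⟨W, w'⟩ hp
        rw [Finset.mem_sigma] at hp
        obtain ⟨_, _, h3⟩ := backward_facts hp.1 hp.2
        have htf : w'.toFinset = W := toFinset_of_mem_RSPW hp.2
        simp only [h3, List.tail_cons, flatten_splitRuns, htf]
      · intro w hw
        rw [Finset.mem_filter] at hw
        obtain ⟨_, _, _, h4, _⟩ := forward_facts hw.1 hw.2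
        rw [h4]
    rw [hbij, Finset.sum_sigma, Finset.mul_sum]
    refine Finset.sum_congr rfl (fun W hW => ?_)
    rw [P, Finset.mul_sum]
    refine Finset.sum_congr rfl (fun w' hw' => ?_)
    rw [pow_succ, mul_comm]

/-- The one-line notation word (with values 1,…,n) of a permutation of `Fin n`. -/
def permWord {n : ℕ} (σ : Equiv.Perm (Fin n)) : List ℕ := List.ofFn fun i => (σ i : ℕ) + 1

/-- The descent generating polynomial of run-sorted permutations of `[n]`. -/
noncomputable def A (n : ℕ) : Polynomial ℝ :=
  ∑ σ ∈ Finset.univ.filter (fun σ : Equiv.Perm (Fin n) => IsRunSorted (permWord σ)),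
    Polynomial.X ^ des (permWord σ)

lemma permWord_nodup {n : ℕ} (σ : Equiv.Perm (Fin n)) : (permWord σ).Nodup := by
  rw [permWord, List.nodup_ofFn]
  intro i j h
  simp only [Nat.add_right_cancel_iff] at h
  exact σ.injective (Fin.val_injective h)

lemma permWord_toFinset {n : ℕ} (σ : Equiv.Perm (Fin n)) :
    (permWord σ).toFinset = Finset.Icc 1 n := by
  ext x
  simp only [permWord, List.mem_toFinset, List.mem_ofFn, Finset.mem_Icc]
  constructor
  · rintro ⟨i, rfl⟩
    have := (σ i).isLt
    show 1 ≤ (σ i : ℕ) + 1 ∧ (σ i : ℕ) + 1 ≤ n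
    omega
  · rintro ⟨h1, h2⟩
    refine ⟨σ.symm ⟨x - 1, by omega⟩, ?_⟩
    show (σ (σ.symm ⟨x - 1, by omega⟩) : ℕ) + 1 = x
    rw [Equiv.apply_symm_apply]
    simp
    omega

lemma A_eq_P (n : ℕ) : A n = P (Finset.Icc 1 n) := by
  classical
  rw [A, P]
  refine Finset.sum_bij (fun σ _ => permWord σ) ?_ ?_ ?_ ?_
  · intro σ hσ
    rw [Finset.mem_filter] at hσ
    exact mem_RSPW_of (permWord_nodup σ) (permWord_toFinset σ) hσ.2
  · intro σ1 h1 σ2 h2 heq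
    have h3 : (fun i : Fin n => (σ1 i : ℕ) + 1) = (fun i => (σ2 i : ℕ) + 1) :=
      List.ofFn_injective heq
    refine Equiv.ext (fun i => ?_)
    have := congrFun h3 i
    simp only [Nat.add_right_cancel_iff] at this
    exact Fin.val_injective this
  · intro w hw
    -- construct the permutation from the word
    have hnd := nodup_of_mem_RSPW hw
    have htf := toFinset_of_mem_RSPW hw
    have hlen : w.length = n := by
      rw [length_of_mem_RSPW hw, Nat.card_Icc]
      omega
    have hval : ∀ i : Fin w.length, 1 ≤ w.get i ∧ w.get i ≤ n := by
      intro i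
      have hm : w.get i ∈ w := by
        have := List.get_mem w i
        simpa using this
      have : w.get i ∈ Finset.Icc 1 n := htf ▸ List.mem_toFinset.2 hm
      simpa using this
    set f : Fin n → Fin n := fun i => ⟨w.get (Fin.cast hlen.symm i) - 1, by
      have := hval (Fin.cast hlen.symm i)
      omega⟩ with hfdef
    have hinj : Function.Injective f := by
      intro i j h
      simp only [hfdef, Fin.mk.injEq] at h
      have h1 := hval (Fin.cast hlen.symm i)
      have h2 := hval (Fin.cast hlen.symm j)
      have : w.get (Fin.cast hlen.symm i) = w.get (Fin.cast hlen.symm j) := by omega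
      have h3 := (List.nodup_iff_injective_get.1 hnd) this
      have : (Fin.cast hlen.symm i : Fin w.length) = Fin.cast hlen.symm j := h3
      exact Fin.cast_injective _ this
    set σ : Equiv.Perm (Fin n) := Equiv.ofBijective f (Finite.injective_iff_bijective.1 hinj)
      with hσdef
    have hword : permWord σ = w := by
      refine List.ext_get (by simp [permWord, hlen]) ?_
      intro i h1 h2
      have hi : i < n := by simpa [permWord] using h1
      have hval' := hval ⟨i, h2⟩
      have hfv : (f ⟨i, hi⟩ : ℕ) = w.get ⟨i, h2⟩ - 1 := rfl
      have hσf : σ ⟨i, hi⟩ = f ⟨i, hi⟩ := rfl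
      simp only [permWord, List.get_ofFn]
      have hcast : (Fin.cast List.length_ofFn ⟨i, h1⟩ : Fin n) = ⟨i, hi⟩ := rfl
      rw [hcast, hσf, hfv]
      omega
    refine ⟨σ, ?_, hword⟩
    rw [Finset.mem_filter]
    refine ⟨Finset.mem_univ _, ?_⟩
    rw [hword]
    exact (mem_RSPW.1 hw).2
  · intro σ hσ
    rfl

lemma Dn_fiber_eq {n i : ℕ} (h1 : 1 ≤ i) (h2 : i ≤ n - 1) (hn : 1 ≤ n) :
    (Dn n).filter (fun W => W.card = i) =
      ((Finset.Icc 2 n).powersetCard i).erase (Finset.Icc (n-i+1) n) := by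
  classical
  ext W
  rw [Finset.mem_filter, Finset.mem_erase, Finset.mem_powersetCard, mem_Dn]
  constructor
  · rintro ⟨⟨hsub, hne, a, ha, b, hb, hab⟩, hcard⟩
    refine ⟨?_, hsub, hcard⟩
    rintro rfl
    simp only [Finset.mem_sdiff, Finset.mem_Icc] at ha hb
    omega
  · rintro ⟨hne_top, hsub, hcard⟩
    refine ⟨⟨hsub, Finset.card_pos.1 (by omega), ?_⟩, hcard⟩
    by_contra hcon
    push_neg at hcon
    have htop_sub : Finset.Icc (n-i+1) n ⊆ W := by
      intro x hx
      simp only [Finset.mem_Icc] at hx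
      by_contra hxW
      have hxC : x ∈ Finset.Icc 1 n \ W := by
        simp only [Finset.mem_sdiff, Finset.mem_Icc]
        exact ⟨⟨by omega, hx.2⟩, hxW⟩
      have hWsub' : W ⊆ Finset.Ioc x n := by
        intro a ha
        have h3 := hcon a ha x hxC
        have h4 : a ≤ n := by
          have := hsub ha
          simp at this
          omega
        simp only [Finset.mem_Ioc]
        have : a ≠ x := fun h => hxW (h ▸ ha)
        omega
      have hcle := Finset.card_le_card hWsub'
      rw [Nat.card_Ioc] at hcle
      omega
    have hcard_top : (Finset.Icc (n-i+1) n).card = i := by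
      rw [Nat.card_Icc]
      omega
    have : Finset.Icc (n-i+1) n = W :=
      Finset.eq_of_subset_of_card_le htop_sub (by omega)
    exact hne_top this.symm

lemma Dn_fiber_card {n i : ℕ} (h1 : 1 ≤ i) (h2 : i ≤ n - 1) (hn : 1 ≤ n) :
    ((Dn n).filter (fun W => W.card = i)).card = Nat.choose (n-1) i - 1 := by
  classical
  rw [Dn_fiber_eq h1 h2 hn, Finset.card_erase_of_mem, Finset.card_powersetCard, Nat.card_Icc,
    show n + 1 - 2 = n - 1 by omega]
  rw [Finset.mem_powersetCard]
  constructor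
  · intro x hx
    simp only [Finset.mem_Icc] at hx ⊢
    omega
  · rw [Nat.card_Icc]
    omega

lemma sum_Dn (n : ℕ) (hn : 1 ≤ n) :
    ∑ W ∈ Dn n, P W =
      ∑ i ∈ Finset.Icc 1 (n-1),
        ((Nat.choose (n-1) i - 1 : ℕ) : Polynomial ℝ) * P (Finset.Icc 1 i) := by
  classical
  rw [← Finset.sum_fiberwise_of_maps_to (g := Finset.card) (t := Finset.Icc 1 (n-1))
    (fun W hW => ?_)]
  · refine Finset.sum_congr rfl (fun i hi => ?_)
    rw [Finset.mem_Icc] at hi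
    have : ∀ W ∈ (Dn n).filter (fun W => W.card = i), P W = P (Finset.Icc 1 i) := by
      intro W hW
      rw [Finset.mem_filter] at hW
      rw [P_eq_P_card W, hW.2]
    rw [Finset.sum_congr rfl this, Finset.sum_const, Dn_fiber_card hi.1 hi.2 hn,
      nsmul_eq_mul]
  · obtain ⟨hsub, hne, _⟩ := mem_Dn.1 hW
    rw [Finset.mem_Icc]
    constructor
    · exact Finset.card_pos.2 hne
    · have := Finset.card_le_card hsub
      rw [Nat.card_Icc] at this
      omega

lemma A_rec (n : ℕ) (hn : 1 ≤ n) :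
    A n = 1 + Polynomial.X *
      ∑ i ∈ Finset.Icc 1 (n-1), ((Nat.choose (n-1) i - 1 : ℕ) : Polynomial ℝ) * A i := by
  rw [A_eq_P, P_recursion n hn, sum_Dn n hn]
  congr 1
  rw [Finset.mul_sum, Finset.mul_sum]
  refine Finset.sum_congr rfl (fun i hi => ?_)
  rw [A_eq_P]

lemma A_one : A 1 = 1 := by
  rw [A_rec 1 le_rfl]
  simp

/-- `A n = A (n-1) + t ∑_{i=1}^{n-2} C(n-2, i-1) A i`. -/
theorem stmt2 (n : ℕ) (hn : 1 ≤ n) :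
    A n = A (n-1) +
      Polynomial.X * ∑ i ∈ Finset.Icc 1 (n-2), ((n-2).choose (i-1) : Polynomial ℝ) * A i := by
  rcases Nat.lt_or_ge n 2 with h2 | h2
  · -- n = 1
    have hn1 : n = 1 := by omega
    subst hn1
    have hA0 : A 0 = 1 := by
      rw [A_eq_P]
      have hicc : Finset.Icc 1 0 = (∅ : Finset ℕ) := rfl
      rw [hicc, P]
      have hR : RSPW (∅ : Finset ℕ) = {[]} := by
        ext w
        rw [mem_RSPW]
        simp only [Finset.mem_singleton]
        constructor
        · rintro ⟨hp, _⟩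
          rw [Finset.sort_empty] at hp
          exact hp.eq_nil
        · rintro rfl
          exact ⟨by simp, by simp [IsRunSorted, runsort, show splitRuns [] = [] from rfl]⟩
      rw [hR, Finset.sum_singleton]
      simp [des]
    simp [A_one, hA0]
  · -- n ≥ 2
    have hrec_n := A_rec n hn
    have hrec_m := A_rec (n-1) (by omega)
    have hm : n - 1 - 1 = n - 2 := by omega
    rw [hm] at hrec_m
    -- peel the top term of the sum in hrec_n
    have hsplit : ∑ i ∈ Finset.Icc 1 (n-1), ((Nat.choose (n-1) i - 1 : ℕ) : Polynomial ℝ) * A i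
        = ∑ i ∈ Finset.Icc 1 (n-2), ((Nat.choose (n-1) i - 1 : ℕ) : Polynomial ℝ) * A i := by
      have h1 : n - 1 = (n - 2) + 1 := by omega
      rw [h1, Finset.sum_Icc_succ_top (by omega), Nat.choose_self]
      simp
    rw [hsplit] at hrec_n
    -- Pascal on each coefficient
    have hpascal : ∀ i ∈ Finset.Icc 1 (n-2),
        ((Nat.choose (n-1) i - 1 : ℕ) : Polynomial ℝ) * A i
        = ((Nat.choose (n-2) i - 1 : ℕ) : Polynomial ℝ) * A i
          + ((Nat.choose (n-2) (i-1) : ℕ) : Polynomial ℝ) * A i := by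
      intro i hi
      rw [Finset.mem_Icc] at hi
      have hch : Nat.choose (n-1) i = Nat.choose (n-2) i + Nat.choose (n-2) (i-1) := by
        have h1 : n - 1 = (n - 2) + 1 := by omega
        have h2 : i = (i - 1) + 1 := by omega
        rw [h1, h2, Nat.choose_succ_succ']
        rw [← h2]
        omega
      have hge : 1 ≤ Nat.choose (n-2) i := Nat.choose_pos (by omega)
      rw [← add_mul]
      congr 1
      have : (Nat.choose (n-1) i - 1 : ℕ) = (Nat.choose (n-2) i - 1) + Nat.choose (n-2) (i-1) := by
        omega
      rw [this]
      push_cast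
      ring
    rw [Finset.sum_congr rfl hpascal, Finset.sum_add_distrib, mul_add] at hrec_n
    rw [hrec_n, hrec_m]
    push_cast
    ring
end

section
/- The formal power series G(t,u) = e^u · exp(t(e^u − u − 1)) in ℝ[t][[u]] satisfies the differential equation ∂G/∂u = (1 + t(e^u − 1))·G, with G(t,0) = 1. Consequently, its coefficients A_{n+1}(t) defined by G(t,u) = ∑_{n≥0} A_{n+1}(t) u^n/n! satisfy A_1(t) = 1 and A_n(t) = A_{n-1}(t) + t·∑_{i=1}^{n-2} C(n-2, i-1) A_i(t). -/
open PowerSeries Finset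

abbrev R := Polynomial ℝ

/-- The exponential `exp(f)` of a power series `f` with zero constant term, defined
coefficientwise by `coeff n (exp f) = ∑_{k ≤ n} (1/k!) coeff n (f^k)`. -/
noncomputable def expComp (f : PowerSeries (Polynomial ℝ)) : PowerSeries (Polynomial ℝ) :=
  PowerSeries.mk fun n =>
    ∑ k ∈ Finset.range (n+1), ((k.factorial : ℝ)⁻¹) • (PowerSeries.coeff n (f ^ k))


lemma coeff_pow_zero (f : R⟦X⟧) (hf : constantCoeff f = 0) {k n : ℕ} (h : n < k) :
    coeff n (f ^ k) = 0 := by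
  obtain ⟨g, rfl⟩ := X_dvd_iff.2 hf
  rw [mul_pow]
  exact (X_pow_dvd_iff (n := k)).1 (Dvd.intro _ rfl) n h

lemma coeff_expComp_le (f : R⟦X⟧) (hf : constantCoeff f = 0) {n N : ℕ} (h : n + 1 ≤ N) :
    coeff n (expComp f) = ∑ k ∈ range N, ((k.factorial : ℝ)⁻¹) • coeff n (f ^ k) := by
  rw [expComp, coeff_mk]
  refine Finset.sum_subset (range_subset_range.2 h) (fun k _ hk => ?_)
  rw [coeff_pow_zero f hf (by simpa using hk), smul_zero]

lemma hpow (f : R⟦X⟧) (n k : ℕ) :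
    coeff n (PowerSeries.derivative R f * f ^ k)
      = (((k : ℝ) + 1)⁻¹) • (coeff (n+1) (f ^ (k+1)) * (n+1)) := by
  have h1 : PowerSeries.derivative R (f ^ (k+1))
      = (k+1) • (f ^ k * PowerSeries.derivative R f) := by
    simpa [smul_eq_mul] using (PowerSeries.derivative R).leibniz_pow (a := f) (k+1)
  have h2 : ((k + 1 : ℕ) : ℝ) • coeff n (PowerSeries.derivative R f * f ^ k)
      = coeff (n+1) (f ^ (k+1)) * (n+1) := by
    rw [Nat.cast_smul_eq_nsmul, ← map_nsmul, mul_comm, ← h1, coeff_derivative]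
  push_cast at h2
  rw [← h2, smul_smul, inv_mul_cancel₀ (by positivity : ((k:ℝ)+1) ≠ 0), one_smul]

lemma derivative_expComp (f : R⟦X⟧) (hf : constantCoeff f = 0) :
    PowerSeries.derivative R (expComp f) = PowerSeries.derivative R f * expComp f := by
  refine PowerSeries.ext fun n => ?_
  rw [coeff_derivative, coeff_expComp_le f hf (le_refl (n+2)),
    Finset.sum_mul, Finset.sum_range_succ']
  simp only [pow_zero, coeff_one, Nat.add_eq_zero, Nat.succ_ne_zero, and_false, if_false,
    smul_zero, zero_mul, add_zero]
  rw [coeff_mul, Finset.Nat.sum_antidiagonal_eq_sum_range_succ_mk]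
  have : ∀ i ∈ range (n+1), coeff i (PowerSeries.derivative R f) * coeff (n-i) (expComp f)
      = ∑ k ∈ range (n+1), ((k.factorial : ℝ)⁻¹) •
          (coeff i (PowerSeries.derivative R f) * coeff (n-i) (f ^ k)) := by
    intro i hi
    rw [coeff_expComp_le f hf (N := n+1) (by simp only [mem_range] at hi; omega), Finset.mul_sum]
    exact Finset.sum_congr rfl fun k _ => (mul_smul_comm _ _ _)
  rw [Finset.sum_congr rfl this, Finset.sum_comm]
  refine Finset.sum_congr rfl fun k _ => ?_
  rw [← Finset.smul_sum, ← Finset.Nat.sum_antidiagonal_eq_sum_range_succ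
    (fun i j => coeff i (PowerSeries.derivative R f) * coeff j (f ^ k)) n,
    ← coeff_mul, hpow, smul_smul, smul_mul_assoc]
  congr 1
  rw [Nat.factorial_succ]
  push_cast
  rw [mul_inv]
  ring


/-- `G(t,u) = e^u · exp(t (e^u − u − 1))` as a power series in `u` over `ℝ[t]`. -/
noncomputable def G : PowerSeries (Polynomial ℝ) :=
  PowerSeries.exp (Polynomial ℝ) *
    expComp ((PowerSeries.C Polynomial.X) *
      (PowerSeries.exp (Polynomial ℝ) - PowerSeries.X - 1))

/-- `A_{n+1}(t)`, the coefficients of `G` defined by `G = ∑_{n≥0} A_{n+1}(t) uⁿ/n!`. -/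
noncomputable def Ac (m : ℕ) : Polynomial ℝ :=
  ((m-1).factorial : ℝ) • PowerSeries.coeff (m-1) G

lemma derivExp1 : PowerSeries.derivative R (exp R) = exp R := by
  ext n
  rw [coeff_derivative, coeff_exp, coeff_exp]
  have : ((n:R) + 1) = algebraMap ℚ R ((n:ℚ)+1) := by push_cast; simp
  rw [this, ← map_mul]
  congr 1
  rw [Nat.factorial_succ]
  field_simp
  congr 1
  field_simp
  push_cast
  ring

lemma hf0 : constantCoeff ((PowerSeries.C Polynomial.X) * (exp R - X - 1)) = 0 := by
  simp

lemma hD (f : R⟦X⟧) : PowerSeries.derivative R f = f.derivativeFun := rfl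

lemma derivOne : PowerSeries.derivative R (1 : R⟦X⟧) = 0 := by
  rw [hD, derivativeFun_one]

lemma part1 : PowerSeries.derivative R G =
    (1 + PowerSeries.C Polynomial.X * (exp R - 1)) * G := by
  have hdf : PowerSeries.derivative R ((PowerSeries.C Polynomial.X) * (exp R - X - 1))
      = PowerSeries.C Polynomial.X * (exp R - 1) := by
    rw [hD, derivativeFun_mul, ← hD, ← hD, map_sub, map_sub, derivExp1, derivative_X,
      derivative_C, derivOne]
    simp only [smul_eq_mul]
    ring
  rw [G, hD, derivativeFun_mul, ← hD, ← hD, derivative_expComp _ hf0, derivExp1, hdf]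
  simp only [smul_eq_mul]
  ring

lemma constCoeff_expComp (f : R⟦X⟧) : constantCoeff (expComp f) = 1 := by
  rw [← coeff_zero_eq_constantCoeff_apply, expComp, coeff_mk]
  simp

lemma part2 : constantCoeff G = 1 := by
  rw [G, map_mul, constCoeff_expComp, constantCoeff_exp, mul_one]

lemma halg (i : ℕ) (x : R) :
    algebraMap ℚ R (1 / i.factorial) * x = ((i.factorial : ℝ))⁻¹ • x := by
  have : algebraMap ℚ R (1 / i.factorial) = Polynomial.C ((i.factorial : ℝ))⁻¹ := by
    have : ((1 / i.factorial : ℚ) : ℝ) = ((i.factorial : ℝ))⁻¹ := by push_cast; ring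
    rw [← this]
    rfl
  rw [this, ← Polynomial.smul_eq_C_mul]

lemma key (m : ℕ) : coeff (m+1) G * ((m : Polynomial ℝ)+1) = coeff m G + Polynomial.X *
    ((∑ i ∈ range (m+1), ((i.factorial : ℝ))⁻¹ • coeff (m-i) G) - coeff m G) := by
  have h := congrArg (coeff m) part1
  rw [coeff_derivative] at h
  have hexpand : (1 + PowerSeries.C Polynomial.X * (exp R - 1)) * G
      = G + PowerSeries.C Polynomial.X * (exp R * G - G) := by ring
  rw [hexpand, map_add, coeff_C_mul, map_sub, coeff_mul,
    Finset.Nat.sum_antidiagonal_eq_sum_range_succ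
      (fun i j => coeff i (exp R) * coeff j G) m] at h
  simp only [coeff_exp] at h
  simp only [halg] at h
  exact h

lemma hcast (c : ℕ) (r : ℝ) (x : R) : (c : R) * (r • x) = ((c : ℝ) * r) • x := by
  rw [mul_smul_comm, ← map_natCast (Polynomial.C (R := ℝ)) c, ← Polynomial.smul_eq_C_mul,
    smul_smul, mul_comm r]

lemma hsum (m : ℕ) :
    ((m.factorial : ℝ)) • (∑ i ∈ range (m+1), ((i.factorial : ℝ))⁻¹ • coeff (m-i) G)
      - (m.factorial : ℝ) • coeff m G
    = ∑ j ∈ range m, ((m.choose j : R)) * ((j.factorial : ℝ) • coeff j G) := by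
  rw [Finset.smul_sum, Finset.sum_range_succ']
  simp only [Nat.sub_zero, Nat.factorial_zero, Nat.cast_one, inv_one, one_smul]
  rw [add_sub_cancel_right, ← Finset.sum_range_reflect]
  refine Finset.sum_congr rfl fun j hj => ?_
  rw [mem_range] at hj
  have h1 : m - (m - 1 - j + 1) = j := by omega
  have h2 : m - 1 - j + 1 = m - j := by omega
  rw [h1, h2, smul_smul, hcast]
  congr 1
  have h3 := Nat.choose_mul_factorial_mul_factorial (le_of_lt hj)
  have h4 : ((m-j).factorial : ℝ) ≠ 0 := by positivity
  field_simp
  have := congrArg (Nat.cast : ℕ → ℝ) h3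
  push_cast at this
  linarith [this]

lemma hL (m : ℕ) (x : R) :
    (m.factorial : ℝ) • (x * ((m : R) + 1)) = (((m+1).factorial : ℝ)) • x := by
  have h1 : ((m : R) + 1) = Polynomial.C ((m : ℝ) + 1) := by
    rw [map_add, map_one, map_natCast]
  rw [h1, mul_comm, ← Polynomial.smul_eq_C_mul, smul_smul, Nat.factorial_succ]
  congr 1
  push_cast
  ring

lemma part4 (n : ℕ) (hn : 2 ≤ n) : Ac n = Ac (n-1) +
    Polynomial.X * ∑ i ∈ Finset.Icc 1 (n-2), ((n-2).choose (i-1) : Polynomial ℝ) * Ac i := by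
  obtain ⟨m, rfl⟩ : ∃ m, n = m + 2 := ⟨n - 2, by omega⟩
  have e1 : m + 2 - 1 = m + 1 := by omega
  have e2 : m + 2 - 2 = m := by omega
  rw [e1, e2]
  have e3 : ∑ i ∈ Finset.Icc 1 m, (m.choose (i-1) : Polynomial ℝ) * Ac i
      = ∑ j ∈ range m, ((m.choose j : R)) * ((j.factorial : ℝ) • coeff j G) := by
    rw [← Finset.Ico_add_one_right_eq_Icc, Finset.sum_Ico_eq_sum_range]
    refine Finset.sum_congr (by norm_num) fun j hj => ?_
    have : 1 + j - 1 = j := by omega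
    rw [this, Ac, this]
  rw [e3, Ac, Ac, e1, Nat.add_sub_cancel, ← hsum m, ← hL m, key m, smul_add,
    ← mul_smul_comm, smul_sub]

lemma part3 : Ac 1 = 1 := by
  rw [Ac]
  norm_num [coeff_zero_eq_constantCoeff_apply, part2]

/-- `G` satisfies `∂G/∂u = (1 + t(e^u − 1)) G` with `G(t,0) = 1`, and consequently
its coefficients satisfy `A_1 = 1` and
`A_n = A_{n-1} + t ∑_{i=1}^{n-2} C(n-2, i-1) A_i`. -/
theorem stmt10 :
    PowerSeries.derivative (Polynomial ℝ) G =
      (1 + PowerSeries.C Polynomial.X *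
        (PowerSeries.exp (Polynomial ℝ) - 1)) * G ∧
    PowerSeries.constantCoeff G = 1 ∧
    Ac 1 = 1 ∧
    (∀ n : ℕ, 2 ≤ n → Ac n = Ac (n-1) +
      Polynomial.X * ∑ i ∈ Finset.Icc 1 (n-2), ((n-2).choose (i-1) : Polynomial ℝ) * Ac i) := by
  exact ⟨part1, part2, part3, part4⟩
end

section
/- For n ≥ 0 and k ≥ 2, the number of binary words w of length n such that runsort(w) has exactly k−1 descents equals C(n, 2k) + C(n, 2k+1), and the number of binary words of length n such that runsort(w) has no descents equals C(n+1, 3) + (n+1). -/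
/-- The word (list of 0s and 1s) corresponding to a binary word on `Fin n`. -/
def word {n : ℕ} (w : Fin n → Fin 2) : List ℕ := List.ofFn fun i => (w i : ℕ)

namespace Aux17

def asc (l : List ℕ) : ℕ := ((l.zip l.tail).filter fun p => decide (p.1 < p.2)).length

def tau (r : List ℕ) : ℕ :=
  if r.head? = some 1 then 2 else if r.getLast? = some 1 then 1 else 0

structure Run (r : List ℕ) : Prop where
  ne : r ≠ []
  chain : r.Chain' (· ≤ ·)
  bin : ∀ x ∈ r, x ≤ 1

lemma tau_le_two (r : List ℕ) : tau r ≤ 2 := by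
  unfold tau; split
  · omega
  · split <;> omega

lemma des_cons2 (x y : ℕ) (t : List ℕ) :
    des (x :: y :: t) = (if y < x then 1 else 0) + des (y :: t) := by
  simp [des, List.filter_cons]
  split <;> simp [Nat.add_comm]

lemma asc_cons2 (x y : ℕ) (t : List ℕ) :
    asc (x :: y :: t) = (if x < y then 1 else 0) + asc (y :: t) := by
  simp [asc, List.filter_cons]
  split <;> simp [Nat.add_comm]

lemma des_eq_zero : ∀ l : List ℕ, l.Chain' (· ≤ ·) → des l = 0
  | [], _ => rfl
  | [_], _ => rfl
  | x :: y :: t, h => by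
    replace h := List.isChain_cons_cons.mp h
    have h1 := h.1
    rw [des_cons2, des_eq_zero (y :: t) h.2, if_neg (by omega)]

lemma des_append : ∀ (r : List ℕ) (a : ℕ), r.getLast? = some a → ∀ (b : ℕ) (s : List ℕ),
    des (r ++ b :: s) = des r + des (b :: s) + (if b < a then 1 else 0)
  | [], a, h => by simp at h
  | [x], a, h => by
    intro b s
    simp at h; subst h
    rw [List.singleton_append, des_cons2]
    rw [show des [x] = 0 from rfl]
    ring
  | x :: y :: r, a, h => by
    intro b s
    rw [List.getLast?_cons_cons] at h
    have ih := des_append (y :: r) a h b s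
    have e : (x :: y :: r) ++ b :: s = x :: y :: (r ++ b :: s) := rfl
    rw [e, des_cons2]
    have e2 : y :: (r ++ b :: s) = (y :: r) ++ b :: s := rfl
    rw [e2, ih, des_cons2]
    ring

lemma chain_head_le {l : List ℕ} (hc : l.Chain' (· ≤ ·)) {h : ℕ} (hh : l.head? = some h) :
    ∀ x ∈ l, h ≤ x := by
  have hp := List.isChain_iff_pairwise.mp hc
  cases l with
  | nil => simp at hh
  | cons y t =>
    simp only [List.head?_cons, Option.some.injEq] at hh
    subst hh
    intro x hx
    rcases List.mem_cons.mp hx with rfl | hx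
    · exact le_refl x
    · exact (List.pairwise_cons.mp hp).1 x hx

lemma chain_le_getLast : ∀ (l : List ℕ), l.Chain' (· ≤ ·) → ∀ (a : ℕ), l.getLast? = some a →
    ∀ x ∈ l, x ≤ a
  | [] => by simp
  | [y] => by intro _ a ha x hx; simp at ha hx; omega
  | y :: z :: t => by
    intro hc a ha x hx
    replace hc := List.isChain_cons_cons.mp hc
    rw [List.getLast?_cons_cons] at ha
    rcases List.mem_cons.mp hx with rfl | hx
    · have hz := chain_le_getLast (z :: t) hc.2 a ha z (by simp)
      have := hc.1
      omega
    · exact chain_le_getLast (z :: t) hc.2 a ha x hx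

lemma run_facts {r : List ℕ} (hr : Run r) :
    ∃ h a, r.head? = some h ∧ r.getLast? = some a ∧ a ∈ r ∧ h ≤ a ∧ a ≤ 1 ∧ tau r = h + a := by
  obtain ⟨x, t, rfl⟩ := List.exists_cons_of_ne_nil hr.ne
  have hne : x :: t ≠ [] := by simp
  have hlast := List.getLast?_eq_getLast hne
  set a := (x :: t).getLast hne with ha
  have hmem : a ∈ x :: t := List.getLast_mem hne
  have hxa : x ≤ a := chain_head_le hr.chain (List.head?_cons) a hmem
  have ha1 : a ≤ 1 := hr.bin a hmem
  refine ⟨x, a, List.head?_cons, hlast, hmem, hxa, ha1, ?_⟩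
  unfold tau
  rw [List.head?_cons, hlast]
  by_cases hx : x = 1
  · have hA : a = 1 := by omega
    simp [hx, hA]
  · have hx0 : x = 0 := by omega
    by_cases ha' : a = 1
    · simp [hx0, ha']
    · have hA : a = 0 := by omega
      simp [hx0, hA]

lemma lexLe_trans : ∀ a b c : List ℕ, lexLe a b = true → lexLe b c = true → lexLe a c = true
  | [], _, _, _, _ => by simp [lexLe]
  | x :: as, [], c, h, _ => by simp [lexLe] at h
  | x :: as, y :: bs, [], _, h => by simp [lexLe] at h
  | x :: as, y :: bs, z :: cs, h1, h2 => by
    simp only [lexLe, Bool.or_eq_true, decide_eq_true_eq, Bool.and_eq_true, beq_iff_eq] at h1 h2 ⊢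
    rcases h1 with h1 | ⟨rfl, h1⟩
    · rcases h2 with h2 | ⟨rfl, h2⟩
      · exact Or.inl (lt_trans h1 h2)
      · exact Or.inl h1
    · rcases h2 with h2 | ⟨rfl, h2⟩
      · exact Or.inl h2
      · exact Or.inr ⟨rfl, lexLe_trans as bs cs h1 h2⟩

lemma lexLe_total : ∀ a b : List ℕ, (lexLe a b || lexLe b a) = true
  | [], b => by simp [lexLe]
  | x :: as, [] => by simp [lexLe]
  | x :: as, y :: bs => by
    have ih := lexLe_total as bs
    simp only [lexLe, Bool.or_eq_true, decide_eq_true_eq, Bool.and_eq_true, beq_iff_eq] at ih ⊢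
    rcases Nat.lt_trichotomy x y with h | h | h
    · exact Or.inl (Or.inl h)
    · subst h
      rcases ih with h | h
      · exact Or.inl (Or.inr ⟨rfl, h⟩)
      · exact Or.inr (Or.inr ⟨rfl, h⟩)
    · exact Or.inr (Or.inl h)

lemma lexLe_zero : ∀ (r r' : List ℕ), (∀ y ∈ r', y = 0) → lexLe r r' = true → ∀ x ∈ r, x = 0
  | [], _, _, _ => by simp
  | x :: as, [], _, h => by simp [lexLe] at h
  | x :: as, y :: bs, hz, h => by
    intro u hu
    have hy : y = 0 := hz y (by simp)
    simp only [lexLe, Bool.or_eq_true, decide_eq_true_eq, Bool.and_eq_true, beq_iff_eq] at h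
    rcases h with h | ⟨rfl, h⟩
    · omega
    · rcases List.mem_cons.mp hu with rfl | hu
      · omega
      · exact lexLe_zero as bs (fun v hv => hz v (List.mem_cons_of_mem _ hv)) h u hu

lemma lexLe_one_head {t : List ℕ} {b : ℕ} {s : List ℕ} (h : lexLe (1 :: t) (b :: s) = true) :
    1 ≤ b := by
  simp only [lexLe, Bool.or_eq_true, decide_eq_true_eq, Bool.and_eq_true, beq_iff_eq] at h
  rcases h with h | ⟨h, -⟩ <;> omega

lemma tau_mono {r r' : List ℕ} (hr : Run r) (hr' : Run r') (hle : lexLe r r' = true) :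
    tau r ≤ tau r' := by
  obtain ⟨h, a, hh, ha, hamem, hha, ha1, ht⟩ := run_facts hr
  obtain ⟨h', a', hh', ha', hamem', hha', ha1', ht'⟩ := run_facts hr'
  have imp1 : a' = 0 → a = 0 := by
    intro h0
    have hz : ∀ y ∈ r', y = 0 := by
      intro y hy
      have := chain_le_getLast r' hr'.chain a' ha' y hy
      omega
    exact lexLe_zero r r' hz hle a hamem
  have imp2 : h = 1 → h' = 1 := by
    intro h1
    obtain ⟨x, tl, rfl⟩ := List.exists_cons_of_ne_nil hr.ne
    obtain ⟨x', tl', rfl⟩ := List.exists_cons_of_ne_nil hr'.ne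
    simp only [List.head?_cons, Option.some.injEq] at hh hh'
    rw [show x = 1 by omega] at hle
    have hone := lexLe_one_head hle
    have hb := hr'.bin x' (by simp)
    omega
  omega

lemma des_flatten : ∀ rs : List (List ℕ), (∀ r ∈ rs, Run r) →
    rs.Pairwise (fun r r' => tau r ≤ tau r') →
    des rs.flatten = rs.countP (fun r => tau r == 1) - 1
  | [], _, _ => by simp [des]
  | [r], h, _ => by
    have hr := h r (by simp)
    have e : ([r] : List (List ℕ)).flatten = r := by simp
    rw [e, des_eq_zero r hr.chain, List.countP_cons]
    simp only [List.countP_nil]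
    split <;> omega
  | r :: r' :: rest, h, hp => by
    have hr := h r (by simp)
    have hr' := h r' (by simp)
    obtain ⟨hG, a, hh, ha, hamem, hha, ha1, ht⟩ := run_facts hr
    obtain ⟨b, s, rfl⟩ := List.exists_cons_of_ne_nil hr'.ne
    obtain ⟨b2, a', hh', ha', hamem', hha', ha1', ht'⟩ := run_facts hr'
    simp only [List.head?_cons, Option.some.injEq] at hh'
    subst hh'
    have hfl : (r :: (b :: s) :: rest).flatten = r ++ (b :: (s ++ rest.flatten)) := by simp
    rw [hfl, des_append r a ha b _, des_eq_zero r hr.chain]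
    have e : b :: (s ++ rest.flatten) = ((b :: s) :: rest).flatten := by simp
    have hptl : ((b :: s) :: rest).Pairwise (fun r r' => tau r ≤ tau r') :=
      (List.pairwise_cons.mp hp).2
    have ih := des_flatten ((b :: s) :: rest)
      (fun q hq => h q (List.mem_cons_of_mem _ hq)) hptl
    rw [e, ih]
    have hmono : tau r ≤ tau (b :: s) := (List.pairwise_cons.mp hp).1 _ (by simp)
    have hMsplit : ((b :: s) :: rest).countP (fun q => tau q == 1)
        = rest.countP (fun q => tau q == 1) + (if tau (b :: s) = 1 then 1 else 0) := by
      rw [List.countP_cons]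
      simp [beq_iff_eq]
    have hcount : (r :: (b :: s) :: rest).countP (fun q => tau q == 1)
        = ((b :: s) :: rest).countP (fun q => tau q == 1) + (if tau r = 1 then 1 else 0) := by
      rw [List.countP_cons]
      simp [beq_iff_eq]
    rw [hcount]
    have hM0 : tau r = 1 → tau (b :: s) ≠ 1 →
        ((b :: s) :: rest).countP (fun q => tau q == 1) = 0 := by
      intro h1 h2
      have h2' : tau (b :: s) = 2 := by omega
      rw [List.countP_eq_zero]
      intro q hq
      rcases List.mem_cons.mp hq with rfl | hq
      · simp [h2']
      · have hle : tau (b :: s) ≤ tau q := (List.pairwise_cons.mp hptl).1 q hq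
        have h2'' : tau q ≤ 2 := tau_le_two q
        have : tau q = 2 := by omega
        simp [this]
    by_cases h1 : tau r = 1 <;> by_cases h2 : tau (b :: s) = 1
    · have hba : b < a := by omega
      rw [if_pos hba, if_pos h1]
      rw [hMsplit, if_pos h2]
      omega
    · have hM0' := hM0 h1 h2
      have hba : ¬ b < a := by omega
      rw [if_neg hba, if_pos h1, hM0']
    · have hba : ¬ b < a := by omega
      rw [if_neg hba, if_neg h1]
      omega
    · have hba : ¬ b < a := by omega
      rw [if_neg hba, if_neg h1]
      omega

lemma splitRuns_head : ∀ (xs : List ℕ) (x : ℕ), ∃ t rs, splitRuns (x :: xs) = (x :: t) :: rs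
  | [], x => ⟨[], [], rfl⟩
  | y :: rest, x => by
    obtain ⟨t, rs, h⟩ := splitRuns_head rest y
    simp only [splitRuns, h]
    by_cases hxy : x ≤ y
    · exact ⟨y :: t, rs, by simp [hxy]⟩
    · exact ⟨[], (y :: t) :: rs, by simp [hxy]⟩

lemma splitRuns_runs : ∀ (l : List ℕ), ∀ r ∈ splitRuns l,
    r ≠ [] ∧ r.Chain' (· ≤ ·) ∧ ∀ x ∈ r, x ∈ l
  | [] => by simp [splitRuns]
  | [x] => by
    intro r hr
    simp [splitRuns] at hr
    subst hr
    refine ⟨by simp, List.isChain_singleton _, by simp⟩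
  | x :: y :: rest => by
    intro r hr
    obtain ⟨t, rs, h⟩ := splitRuns_head rest y
    have ih := splitRuns_runs (y :: rest)
    simp only [splitRuns, h] at hr
    by_cases hxy : x ≤ y
    · rw [if_pos hxy] at hr
      rcases List.mem_cons.mp hr with rfl | hr
      · obtain ⟨h1, h2, h3⟩ := ih (y :: t) (by rw [h]; simp)
        refine ⟨by simp, List.isChain_cons_cons.mpr ⟨hxy, h2⟩, ?_⟩
        intro v hv
        rcases List.mem_cons.mp hv with rfl | hv
        · simp
        · exact List.mem_cons_of_mem _ (h3 v hv)
      · obtain ⟨h1, h2, h3⟩ := ih r (by rw [h]; exact List.mem_cons_of_mem _ hr)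
        exact ⟨h1, h2, fun v hv => List.mem_cons_of_mem _ (h3 v hv)⟩
    · rw [if_neg hxy] at hr
      rcases List.mem_cons.mp hr with rfl | hr
      · exact ⟨by simp, List.isChain_singleton _, by intro v hv; simp at hv; simp [hv]⟩
      · obtain ⟨h1, h2, h3⟩ := ih r (by rw [h]; exact hr)
        exact ⟨h1, h2, fun v hv => List.mem_cons_of_mem _ (h3 v hv)⟩

lemma asc_countP : ∀ (l : List ℕ), (∀ x ∈ l, x ≤ 1) →
    asc l = (splitRuns l).countP (fun r => tau r == 1)
  | [] => by intro _; simp [asc, splitRuns]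
  | [x] => by
    intro hb
    have hx := hb x (by simp)
    have htau : tau [x] ≠ 1 := by
      unfold tau
      simp only [List.head?_cons, List.getLast?_singleton, Option.some.injEq]
      by_cases hx1 : x = 1
      · simp [hx1]
      · simp [hx1]
    show asc [x] = ([[x]] : List (List ℕ)).countP (fun r => tau r == 1)
    rw [List.countP_cons]
    simp [asc, beq_iff_eq, htau]
  | x :: y :: t => by
    intro hb
    have hx1 : x ≤ 1 := hb x (by simp)
    have hb' : ∀ v ∈ y :: t, v ≤ 1 := fun v hv => hb v (List.mem_cons_of_mem _ hv)
    obtain ⟨s, rs, hsp⟩ := splitRuns_head t y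
    have ih := asc_countP (y :: t) hb'
    have hrun : Run (y :: s) := by
      obtain ⟨h1, h2, h3⟩ := splitRuns_runs (y :: t) (y :: s) (by rw [hsp]; simp)
      exact ⟨h1, h2, fun v hv => hb' v (h3 v hv)⟩
    obtain ⟨hh, a, hhh, ha, hamem, hha, ha1, ht⟩ := run_facts hrun
    simp only [List.head?_cons, Option.some.injEq] at hhh
    subst hhh
    simp only [splitRuns, hsp]
    by_cases hxy : x ≤ y
    · rw [if_pos hxy]
      rw [asc_cons2, ih, hsp]
      rw [List.countP_cons, List.countP_cons]
      have hrun2 : Run (x :: y :: s) := by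
        refine ⟨by simp, List.isChain_cons_cons.mpr ⟨hxy, hrun.chain⟩, ?_⟩
        intro v hv
        rcases List.mem_cons.mp hv with rfl | hv
        · exact hx1
        · exact hrun.bin v hv
      obtain ⟨h2, a2, hh2, ha2, _, hha2, ha21, ht2⟩ := run_facts hrun2
      simp only [List.head?_cons, Option.some.injEq] at hh2
      subst hh2
      rw [List.getLast?_cons_cons, ha, Option.some.injEq] at ha2
      subst ha2
      simp only [beq_iff_eq]
      rw [ht, ht2]
      by_cases hlt : x < y
      · rw [if_pos hlt]
        have hy1 : y = 1 := by omega
        have ha'' : a = 1 := by omega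
        have hx0 : x = 0 := by omega
        simp [hy1, ha'', hx0]
        omega
      · rw [if_neg hlt]
        have hxy' : x = y := by omega
        simp [hxy']
    · rw [if_neg hxy]
      have hy1 : y ≤ 1 := hb' y (by simp)
      have hx : x = 1 := by omega
      have hy : y = 0 := by omega
      have htau1 : tau [x] = 2 := by
        subst hx
        unfold tau
        simp
      rw [asc_cons2, ih, hsp]
      rw [List.countP_cons (l := (y :: s) :: rs)]
      have : ¬ x < y := by omega
      rw [if_neg this]
      simp [beq_iff_eq, htau1]

lemma des_runsort {l : List ℕ} (hb : ∀ x ∈ l, x ≤ 1) : des (runsort l) = asc l - 1 := by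
  have hperm : List.Perm ((splitRuns l).mergeSort lexLe) (splitRuns l) := List.mergeSort_perm _ _
  have hruns : ∀ r ∈ (splitRuns l).mergeSort lexLe, Run r := by
    intro r hr
    have hr' : r ∈ splitRuns l := hperm.mem_iff.mp hr
    obtain ⟨h1, h2, h3⟩ := splitRuns_runs l r hr'
    exact ⟨h1, h2, fun v hv => hb v (h3 v hv)⟩
  have hsorted := List.pairwise_mergeSort (le := lexLe) lexLe_trans lexLe_total (splitRuns l)
  have hpw : ((splitRuns l).mergeSort lexLe).Pairwise (fun r r' => tau r ≤ tau r') := by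
    refine List.Pairwise.imp_of_mem ?_ hsorted
    intro r r' hrm hrm' hle
    exact tau_mono (hruns r hrm) (hruns r' hrm') hle
  rw [runsort, des_flatten _ hruns hpw, hperm.countP_eq, ← asc_countP l hb]

lemma word_cons {n : ℕ} (x : Fin 2) (w : Fin n → Fin 2) :
    word (Fin.cons x w) = (x : ℕ) :: word w := by
  simp [word, List.ofFn_succ]

lemma word_bin {n : ℕ} (w : Fin n → Fin 2) : ∀ v ∈ word w, v ≤ 1 := by
  intro v hv
  simp only [word, List.mem_ofFn] at hv
  obtain ⟨i, rfl⟩ := hv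
  exact Fin.is_le (w i)

lemma Bcount : ∀ (n c b : ℕ), b ≤ 1 →
    (Finset.univ.filter fun w : Fin n → Fin 2 => asc (b :: word w) = c).card
      = (n + 1).choose (2 * c + b)
  | 0, c, b, hb => by
    have hword : ∀ w : Fin 0 → Fin 2, word w = [] := fun w => by simp [word]
    by_cases hc : c = 0
    · subst hc
      simp only [hword]
      rw [show asc [b] = 0 from rfl]
      simp only [Nat.mul_zero, Nat.zero_add]
      interval_cases b <;> simp [Finset.filter_true_of_mem]
    · simp only [hword]
      rw [show asc [b] = 0 from rfl]
      rw [Nat.choose_eq_zero_of_lt (by omega)]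
      simp [Finset.filter_false_of_mem, hc, Ne.symm hc]
  | n + 1, c, b, hb => by
    rw [Finset.card_filter]
    rw [← Equiv.sum_comp (Fin.consEquiv (fun _ => Fin 2))
      (fun w : Fin (n + 1) → Fin 2 => if asc (b :: word w) = c then 1 else 0)]
    rw [Fintype.sum_prod_type]
    rw [Fin.sum_univ_two]
    have hred : ∀ (x : Fin 2) (w : Fin n → Fin 2),
        (Fin.consEquiv (fun _ => Fin 2)) (x, w) = Fin.cons x w := fun _ _ => rfl
    have e0 : ∀ w : Fin n → Fin 2,
        (if asc (b :: word ((Fin.consEquiv (fun _ => Fin 2)) ((0 : Fin 2), w))) = c then 1 else 0)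
        = (if asc ((0 : ℕ) :: word w) = c then 1 else 0) := by
      intro w
      rw [hred, word_cons]
      norm_num [asc_cons2]
    have e1 : ∀ w : Fin n → Fin 2,
        (if asc (b :: word ((Fin.consEquiv (fun _ => Fin 2)) ((1 : Fin 2), w))) = c then 1 else 0)
        = (if (if b < 1 then 1 else 0) + asc ((1 : ℕ) :: word w) = c then 1 else 0) := by
      intro w
      rw [hred, word_cons]
      norm_num [asc_cons2]
    rw [Finset.sum_congr rfl (fun w _ => e0 w), Finset.sum_congr rfl (fun w _ => e1 w)]
    rw [← Finset.card_filter, Bcount n c 0 (by omega)]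
    simp only [Nat.add_zero]
    interval_cases b
    · simp only [Nat.zero_lt_one, if_pos]
      rcases Nat.eq_zero_or_pos c with rfl | hc
      · have : ∀ w : Fin n → Fin 2, (if 1 + asc ((1:ℕ) :: word w) = 0 then 1 else 0) = 0 := by
          intro w; rw [if_neg (by omega)]
        rw [Finset.sum_congr rfl (fun w _ => this w)]
        simp
      · obtain ⟨c', rfl⟩ : ∃ c', c = c' + 1 := ⟨c - 1, by omega⟩
        have hcond : ∀ w : Fin n → Fin 2,
            (if 1 + asc ((1:ℕ) :: word w) = c' + 1 then 1 else 0)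
            = (if asc ((1:ℕ) :: word w) = c' then 1 else 0) := by
          intro w
          by_cases h : asc ((1:ℕ) :: word w) = c'
          · rw [if_pos (by omega), if_pos h]
          · rw [if_neg (by omega), if_neg h]
        rw [Finset.sum_congr rfl (fun w _ => hcond w)]
        rw [← Finset.card_filter, Bcount n c' 1 (by omega)]
        have h1 : 2 * (c' + 1) + 0 = (2 * c' + 1) + 1 := by ring
        rw [h1, Nat.choose_succ_succ' (n + 1) (2 * c' + 1)]
        have h2 : 2 * c' + 1 + 1 = 2 * (c' + 1) := by ring
        rw [h2]
        omega
    · have : ¬ (1 : ℕ) < 1 := by omega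
      simp only [this, if_false, Nat.zero_add]
      rw [← Finset.card_filter, Bcount n c 1 (by omega)]
      rw [show 2 * c + 1 = (2 * c) + 1 from rfl, Nat.choose_succ_succ' (n + 1) (2 * c)]

lemma Ccount (n c : ℕ) :
    (Finset.univ.filter fun w : Fin n → Fin 2 => asc (word w) = c).card
      = (n + 1).choose (2 * c + 1) := by
  have h1 : ∀ w : Fin n → Fin 2, asc ((1 : ℕ) :: word w) = asc (word w) := by
    intro w
    cases hw : word w with
    | nil => rfl
    | cons y t =>
      rw [asc_cons2]
      have hy : y ≤ 1 := word_bin w y (by rw [hw]; simp)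
      rw [if_neg (by omega)]
      omega
  rw [← Bcount n c 1 (le_refl 1)]
  congr 1
  apply Finset.filter_congr
  intro w _
  rw [h1 w]

end Aux17

/-- The number of binary words of length `n` with exactly `k-1` descents after run-sorting
(`k ≥ 2`) is `C(n,2k)+C(n,2k+1)`, and the number with no descents after run-sorting is
`C(n+1,3)+(n+1)`. -/
theorem stmt17 (n : ℕ) :
    (∀ k : ℕ, 2 ≤ k →
      (Finset.univ.filter fun w : Fin n → Fin 2 =>
        des (runsort (word w)) = k - 1).card = n.choose (2*k) + n.choose (2*k+1)) ∧
    (Finset.univ.filter fun w : Fin n → Fin 2 =>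
      des (runsort (word w)) = 0).card = (n+1).choose 3 + (n+1) := by
  have hdes : ∀ w : Fin n → Fin 2, des (runsort (word w)) = Aux17.asc (word w) - 1 :=
    fun w => Aux17.des_runsort (Aux17.word_bin w)
  constructor
  · intro k hk
    have he : (Finset.univ.filter fun w : Fin n → Fin 2 => des (runsort (word w)) = k - 1)
        = (Finset.univ.filter fun w : Fin n → Fin 2 => Aux17.asc (word w) = k) := by
      apply Finset.filter_congr
      intro w _
      rw [hdes w]
      constructor <;> intro h <;> omega
    rw [he, Aux17.Ccount n k, show 2 * k + 1 = (2 * k) + 1 from rfl,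
      Nat.choose_succ_succ' n (2 * k)]
  · have he : (Finset.univ.filter fun w : Fin n → Fin 2 => des (runsort (word w)) = 0)
        = (Finset.univ.filter fun w : Fin n → Fin 2 => Aux17.asc (word w) = 0)
          ∪ (Finset.univ.filter fun w : Fin n → Fin 2 => Aux17.asc (word w) = 1) := by
      rw [← Finset.filter_or]
      apply Finset.filter_congr
      intro w _
      rw [hdes w]
      constructor <;> intro h <;> omega
    rw [he, Finset.card_union_of_disjoint, Aux17.Ccount n 0, Aux17.Ccount n 1]
    · norm_num
      omega
    · rw [Finset.disjoint_left]
      intro w hw hw'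
      simp only [Finset.mem_filter] at hw hw'
      omega
end
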